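/- arXiv:1708.05135 — 3 statements merged into one kernel-verified Lean document; each statement's English description precedes it below -/
import Mathlib

section
/- For every k ≥ 2, one has e_k BC_{k,k} e_k = e_k BC_{k−1,k−1}, where BC_{k−1,k−1} denotes the subalgebra of BC_{k,k} generated by e_1, s_1, …, s_{k−2}, s̄_1, …, s̄_{k−2}, c_1 and c̄_1. Moreover e_1 BC_{1,1} e_1 = 0. -/
open Polynomial

noncomputable section

/-- Transposition `(a b)` (0-based indices) in the symmetric group on `Fin n`;
it is `1` if an index is out of range. -/
def sw (n a b : ℕ) : Equiv.Perm (Fin n) :=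
  if h : a < n ∧ b < n then Equiv.swap ⟨a, h.1⟩ ⟨b, h.2⟩ else 1

/-- The permutation word `s_{i,j}` of the paper (1-based indices):
`s_{i,j} = s_i s_{i+1,j}` for `i < j`, `s_{i,i} = 1`, `s_{i,j} = s_{i,j+1} s_j` for `i > j`. -/
def sIJ (n i j : ℕ) : Equiv.Perm (Fin n) :=
  if i < j then ((List.range' i (j - i)).map (fun k => sw n (k - 1) k)).prod
  else ((List.range' j (i - j)).reverse.map (fun k => sw n (k - 1) k)).prod

/-- The coefficients `a_{2n+1,j}` of the paper: `acoef ω n j = a_{2n+1,j}`, defined by the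
recursion `a_{1,0} = -1`, `a_{2n+1,j+1} = a_{2n-1,j}` and
`a_{2n+1,0} = ∑_{j=0}^{n-1} a_{2n-1,j} ω_{2j+1}`. -/
def acoef {A : Type} [Ring A] (ω : ℕ → A) : ℕ → ℕ → A
  | 0, _ => -1
  | n + 1, 0 => ∑ j ∈ Finset.range (n + 1), acoef ω n j * ω (2 * j + 1)
  | n + 1, j + 1 => acoef ω n j

/-- The parameters `ω̄_k` determined by the parameters `ω` as in Corollary 3.5:
`ω̄_{2n} = 0` and `ω̄_{2n+1} = ∑_{j=0}^{n} a_{2n+1,j} ω_{2j+1}`. -/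
def obar {R : Type} [CommRing R] (ω : ℕ → R) (k : ℕ) : R :=
  if k % 2 = 0 then 0
  else ∑ j ∈ Finset.range (k / 2 + 1), acoef ω (k / 2) j * ω (2 * j + 1)

/-- Data for the presentation of the walled Brauer–Clifford superalgebra `BC_{r,t}`
(Definition 2.1 together with relations (2.1)–(2.3)) on an `R`-algebra `A`.
The images of the two symmetric groups are recorded as monoid homomorphisms, so the
symmetric group relations among the `s_i` (resp. `s̄_j`) hold automatically. -/
structure WBC (R A : Type) [CommRing R] [Ring A] [Algebra R A] (r t : ℕ) : Type where
  σ : Equiv.Perm (Fin r) →* A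
  σb : Equiv.Perm (Fin t) →* A
  c : Fin r → A
  cb : Fin t → A
  e : A
  c_sq : ∀ i, c i * c i = -1
  c_anti : ∀ i j, i ≠ j → c i * c j = -(c j * c i)
  c_conj : ∀ w i, σ w * c i * σ (w⁻¹) = c (w i)
  cb_sq : ∀ i, cb i * cb i = 1
  cb_anti : ∀ i j, i ≠ j → cb i * cb j = -(cb j * cb i)
  cb_conj : ∀ w i, σb w * cb i * σb (w⁻¹) = cb (w i)
  comm_σσb : ∀ w v, σ w * σb v = σb v * σ w
  comm_σcb : ∀ w j, σ w * cb j = cb j * σ w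
  comm_σbc : ∀ v i, σb v * c i = c i * σb v
  anti_ccb : ∀ i j, c i * cb j = -(cb j * c i)
  e_c1 : ∀ (h1 : 0 < r) (h2 : 0 < t), e * c ⟨0, h1⟩ = e * cb ⟨0, h2⟩
  c1_e : ∀ (h1 : 0 < r) (h2 : 0 < t), c ⟨0, h1⟩ * e = cb ⟨0, h2⟩ * e
  e_sq : e * e = 0
  e_s_e : 1 < r → e * σ (sw r 0 1) * e = e
  e_sb_e : 1 < t → e * σb (sw t 0 1) * e = e
  s_e_comm : ∀ i : ℕ, 0 < i → i + 1 < r → σ (sw r i (i + 1)) * e = e * σ (sw r i (i + 1))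
  sb_e_comm : ∀ j : ℕ, 0 < j → j + 1 < t → σb (sw t j (j + 1)) * e = e * σb (sw t j (j + 1))
  braid1 : 1 < r → 1 < t →
    e * σ (sw r 0 1) * σb (sw t 0 1) * e * σ (sw r 0 1)
      = e * σ (sw r 0 1) * σb (sw t 0 1) * e * σb (sw t 0 1)
  braid2 : 1 < r → 1 < t →
    σ (sw r 0 1) * e * σ (sw r 0 1) * σb (sw t 0 1) * e
      = σb (sw t 0 1) * e * σ (sw r 0 1) * σb (sw t 0 1) * e
  c_e_comm : ∀ i : Fin r, (i : ℕ) ≠ 0 → c i * e = e * c i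
  cb_e_comm : ∀ j : Fin t, (j : ℕ) ≠ 0 → cb j * e = e * cb j
  e_c_e : ∀ h : 0 < r, e * c ⟨0, h⟩ * e = 0
  e_cb_e : ∀ h : 0 < t, e * cb ⟨0, h⟩ * e = 0

namespace WBC

variable {R A : Type} [CommRing R] [Ring A] [Algebra R A] {r t : ℕ}

/-- The transposition `(i,j) ∈ Σ_r` (1-based indices). -/
def tr (d : WBC R A r t) (i j : ℕ) : A := d.σ (sw r (i - 1) (j - 1))

/-- The transposition `(ī,j̄) ∈ Σ_t` (1-based indices). -/
def trb (d : WBC R A r t) (i j : ℕ) : A := d.σb (sw t (i - 1) (j - 1))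

/-- The generator `s_j = (j, j+1)` (1-based). -/
def s (d : WBC R A r t) (j : ℕ) : A := d.σ (sw r (j - 1) j)

/-- The generator `s̄_j` (1-based). -/
def sb (d : WBC R A r t) (j : ℕ) : A := d.σb (sw t (j - 1) j)

/-- The generator `c_i` (1-based). -/
def cn (d : WBC R A r t) (i : ℕ) : A := if h : i - 1 < r then d.c ⟨i - 1, h⟩ else 0

/-- The generator `c̄_i` (1-based). -/
def cbn (d : WBC R A r t) (i : ℕ) : A := if h : i - 1 < t then d.cb ⟨i - 1, h⟩ else 0

/-- `e_{i,j} = (1̄,j̄)(1,i) e_1 (1,i)(1̄,j̄)` (1-based). -/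
def E (d : WBC R A r t) (i j : ℕ) : A := d.trb 1 j * d.tr 1 i * d.e * d.tr 1 i * d.trb 1 j

/-- `ē_{i,j} = c_i e_{i,j} c_i`. -/
def Eb (d : WBC R A r t) (i j : ℕ) : A := d.cn i * d.E i j * d.cn i

/-- `L'_i = ∑_{j=1}^{i-1} (j,i)`. -/
def LL (d : WBC R A r t) (i : ℕ) : A := ∑ j ∈ Finset.Ico 1 i, d.tr j i

/-- The Jucys–Murphy element `L_i = L'_i + c_i L'_i c_i`. -/
def L (d : WBC R A r t) (i : ℕ) : A := d.LL i + d.cn i * d.LL i * d.cn i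

/-- `L̄'_i = ∑_{j=1}^{i-1} (j̄,ī)`. -/
def LLb (d : WBC R A r t) (i : ℕ) : A := ∑ j ∈ Finset.Ico 1 i, d.trb j i

/-- The Jucys–Murphy element `L̄_i = L̄'_i - c̄_i L̄'_i c̄_i`. -/
def Lb (d : WBC R A r t) (i : ℕ) : A := d.LLb i - d.cbn i * d.LLb i * d.cbn i

/-- `y_i = ∑_{j=1}^{i-1} (e_{i,j} + ē_{i,j}) - L_i`. -/
def y (d : WBC R A r t) (i : ℕ) : A := (∑ j ∈ Finset.Ico 1 i, (d.E i j + d.Eb i j)) - d.L i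

/-- `ȳ_i = ∑_{j=1}^{i-1} (e_{j,i} - ē_{j,i}) - L̄_i`. -/
def yb (d : WBC R A r t) (i : ℕ) : A := (∑ j ∈ Finset.Ico 1 i, (d.E j i - d.Eb j i)) - d.Lb i

/-- `c^α = c_1^{α_1} ⋯ c_r^{α_r}`. -/
def cpow (d : WBC R A r t) (α : Fin r → Fin 2) : A :=
  ((List.finRange r).map (fun i => d.c i ^ (α i : ℕ))).prod

/-- `c̄^β = c̄_1^{β_1} ⋯ c̄_t^{β_t}`. -/
def cbpow (d : WBC R A r t) (β : Fin t → Fin 2) : A :=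
  ((List.finRange t).map (fun j => d.cb j ^ (β j : ℕ))).prod

/-- `e^f = e_1 e_2 ⋯ e_f`. -/
def epow (d : WBC R A r t) (f : ℕ) : A :=
  ((List.range f).map (fun i => d.E (i + 1) (i + 1))).prod

/-- Generators of the subalgebra `BC_{m,m}`: the elements `e_1`, `s_1, …, s_{m-1}`,
`s̄_1, …, s̄_{m-1}`, `c_1` and `c̄_1` (interpreted as `∅` when `m = 0`). -/
def lowerGens (d : WBC R A r t) (m : ℕ) : Set A :=
  {x | (1 ≤ m ∧ x = d.e) ∨ (∃ j : ℕ, 1 ≤ j ∧ j + 1 ≤ m ∧ x = d.s j)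
    ∨ (∃ j : ℕ, 1 ≤ j ∧ j + 1 ≤ m ∧ x = d.sb j)
    ∨ (1 ≤ m ∧ x = d.cn 1) ∨ (1 ≤ m ∧ x = d.cbn 1)}

end WBC

/-- `φ` intertwines two sets of walled Brauer–Clifford data. -/
structure WBCHom {R A B : Type} [CommRing R] [Ring A] [Algebra R A] [Ring B] [Algebra R B]
    {r t : ℕ} (d : WBC R A r t) (d' : WBC R B r t) (φ : A →ₐ[R] B) : Prop where
  map_σ : ∀ w, φ (d.σ w) = d'.σ w
  map_σb : ∀ w, φ (d.σb w) = d'.σb w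
  map_c : ∀ i, φ (d.c i) = d'.c i
  map_cb : ∀ j, φ (d.cb j) = d'.cb j
  map_e : φ d.e = d'.e

/-- `A` (with the data `d`) *is* the walled Brauer–Clifford superalgebra `BC_{r,t}`:
it is initial among all algebras with such data. -/
def WBC.IsUniversal {R A : Type} [CommRing R] [Ring A] [Algebra R A] {r t : ℕ}
    (d : WBC R A r t) : Prop :=
  ∀ (B : Type) [Ring B] [Algebra R B], ∀ d' : WBC R B r t, ∃! φ : A →ₐ[R] B, WBCHom d d' φ

/-- An element of `D^f_{r,t}`: data `1 ≤ i_1 < ⋯ < i_f ≤ r` and `k ≤ j_k ≤ t`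
(all 1-based) describing `s_{f,i_f} s̄_{f,j_f} ⋯ s_{1,i_1} s̄_{1,j_1}`. -/
structure DElt (r t f : ℕ) : Type where
  a : Fin f → ℕ
  b : Fin f → ℕ
  ha_mono : StrictMono a
  ha_lb : ∀ k, 1 ≤ a k
  ha_ub : ∀ k, a k ≤ r
  hb_lb : ∀ k : Fin f, (k : ℕ) + 1 ≤ b k
  hb_ub : ∀ k, b k ≤ t

/-- The `Σ_r`-component `s_{f,i_f} ⋯ s_{1,i_1}` of the element of `D^f_{r,t}`. -/
def DElt.pr {r t f : ℕ} (x : DElt r t f) : Equiv.Perm (Fin r) :=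
  ((List.finRange f).reverse.map (fun (k : Fin f) => sIJ r ((k : ℕ) + 1) (x.a k))).prod

/-- The `Σ_t`-component `s̄_{f,j_f} ⋯ s̄_{1,j_1}` of the element of `D^f_{r,t}`. -/
def DElt.pt {r t f : ℕ} (x : DElt r t f) : Equiv.Perm (Fin t) :=
  ((List.finRange f).reverse.map (fun (k : Fin f) => sIJ t ((k : ℕ) + 1) (x.b k))).prod

/-- Index for the basis `{c^α d_1⁻¹ e^f w d_2 c̄^β}` of `BC_{r,t}`; the component
`w ∈ Σ_{r-f} × Σ_{t-f}` is a pair of permutations fixing `1, …, f` pointwise. -/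
structure BCIndex (r t : ℕ) : Type where
  α : Fin r → Fin 2
  β : Fin t → Fin 2
  f : ℕ
  hf : f ≤ min r t
  d1 : DElt r t f
  d2 : DElt r t f
  w : Equiv.Perm (Fin r)
  wb : Equiv.Perm (Fin t)
  hw : ∀ i : Fin r, (i : ℕ) < f → w i = i
  hwb : ∀ j : Fin t, (j : ℕ) < f → wb j = j

/-- The basis element `c^α d_1⁻¹ e^f w d_2 c̄^β` of Theorem 2.4. -/
def WBC.basElt {R A : Type} [CommRing R] [Ring A] [Algebra R A] {r t : ℕ}
    (d : WBC R A r t) (x : BCIndex r t) : A :=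
  d.cpow x.α * d.σ (x.d1.pr⁻¹) * d.σb (x.d1.pt⁻¹) * d.epow x.f *
    d.σ x.w * d.σb x.wb * d.σ x.d2.pr * d.σb x.d2.pt * d.cbpow x.β

/-- Data for the presentation of the affine walled Brauer–Clifford superalgebra
`BC^aff_{r,t}` (Definition 3.1) with distinguished parameter `ω_1 ∈ R`.
`om k` is `ω_k` (with `ω_1` the scalar `ω1` and `ω_{2k} = 0`), `omb k` is `ω̄_k`. -/
structure AWBC (R A : Type) [CommRing R] [Ring A] [Algebra R A] (r t : ℕ) (ω1 : R)
    extends WBC R A r t : Type where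
  x1 : A
  xb1 : A
  om : ℕ → A
  omb : ℕ → A
  om_one : om 1 = algebraMap R A ω1
  om_even : ∀ k, om (2 * k) = 0
  omb_zero : omb 0 = 0
  om_comm : ∀ k, (∀ w, om k * σ w = σ w * om k) ∧ (∀ w, om k * σb w = σb w * om k) ∧
    (∀ i, om k * c i = c i * om k) ∧ (∀ j, om k * cb j = cb j * om k) ∧
    om k * e = e * om k ∧ om k * x1 = x1 * om k ∧ om k * xb1 = xb1 * om k ∧
    (∀ l, om k * om l = om l * om k) ∧ (∀ l, om k * omb l = omb l * om k)
  omb_comm : ∀ k, (∀ w, omb k * σ w = σ w * omb k) ∧ (∀ w, omb k * σb w = σb w * omb k) ∧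
    (∀ i, omb k * c i = c i * omb k) ∧ (∀ j, omb k * cb j = cb j * omb k) ∧
    omb k * e = e * omb k ∧ omb k * x1 = x1 * omb k ∧ omb k * xb1 = xb1 * omb k ∧
    (∀ l, omb k * omb l = omb l * omb k)
  x_comm : ∀ h : 1 < r, x1 * (σ (sw r 0 1) * x1 * σ (sw r 0 1)
      - (1 - c ⟨0, by omega⟩ * c ⟨1, h⟩) * σ (sw r 0 1))
    = (σ (sw r 0 1) * x1 * σ (sw r 0 1)
      - (1 - c ⟨0, by omega⟩ * c ⟨1, h⟩) * σ (sw r 0 1)) * x1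
  x1_c1 : ∀ h : 0 < r, x1 * c ⟨0, h⟩ = -(c ⟨0, h⟩ * x1)
  x1_c : ∀ i : Fin r, (i : ℕ) ≠ 0 → x1 * c i = c i * x1
  s_x1 : ∀ i : ℕ, 0 < i → i + 1 < r → σ (sw r i (i + 1)) * x1 = x1 * σ (sw r i (i + 1))
  xb_comm : ∀ h : 1 < t, xb1 * (σb (sw t 0 1) * xb1 * σb (sw t 0 1)
      - (1 + cb ⟨0, by omega⟩ * cb ⟨1, h⟩) * σb (sw t 0 1))
    = (σb (sw t 0 1) * xb1 * σb (sw t 0 1)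
      - (1 + cb ⟨0, by omega⟩ * cb ⟨1, h⟩) * σb (sw t 0 1)) * xb1
  xb1_cb1 : ∀ h : 0 < t, xb1 * cb ⟨0, h⟩ = -(cb ⟨0, h⟩ * xb1)
  xb1_cb : ∀ j : Fin t, (j : ℕ) ≠ 0 → xb1 * cb j = cb j * xb1
  sb_xb1 : ∀ j : ℕ, 0 < j → j + 1 < t → σb (sw t j (j + 1)) * xb1 = xb1 * σb (sw t j (j + 1))
  e_xsum : e * (x1 + xb1) = 0
  xsum_e : (x1 + xb1) * e = 0
  e_sxs : 1 < r → e * (σ (sw r 0 1) * x1 * σ (sw r 0 1)) = (σ (sw r 0 1) * x1 * σ (sw r 0 1)) * e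
  x_mixed : ∀ h : 0 < r, x1 * (e + xb1 - c ⟨0, h⟩ * e * c ⟨0, h⟩)
      = (e - c ⟨0, h⟩ * e * c ⟨0, h⟩ + xb1) * x1
  e_sbxbsb : 1 < t →
    e * (σb (sw t 0 1) * xb1 * σb (sw t 0 1)) = (σb (sw t 0 1) * xb1 * σb (sw t 0 1)) * e
  e_xodd : ∀ k : ℕ, e * x1 ^ (2 * k + 1) * e = om (2 * k + 1) * e
  e_xeven : ∀ k : ℕ, 1 ≤ k → e * x1 ^ (2 * k) * e = 0
  e_xb : ∀ k : ℕ, 1 ≤ k → e * xb1 ^ k * e = omb k * e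
  x1_cb_comm : ∀ j, x1 * cb j = cb j * x1
  xb1_c_comm : ∀ i, xb1 * c i = c i * xb1
  x1_σb : ∀ w, σb w * x1 = x1 * σb w
  xb1_σ : ∀ w, σ w * xb1 = xb1 * σ w

namespace AWBC

variable {R A : Type} [CommRing R] [Ring A] [Algebra R A] {r t : ℕ} {ω1 : R}

/-- `x'_i = s_{i-1} ⋯ s_1 x_1 s_1 ⋯ s_{i-1}` (1-based). -/
def xp (d : AWBC R A r t ω1) (i : ℕ) : A :=
  ((List.range (i - 1)).reverse.map (fun k => d.toWBC.s (k + 1))).prod * d.x1 *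
    ((List.range (i - 1)).map (fun k => d.toWBC.s (k + 1))).prod

/-- `x̄'_j = s̄_{j-1} ⋯ s̄_1 x̄_1 s̄_1 ⋯ s̄_{j-1}` (1-based). -/
def xbp (d : AWBC R A r t ω1) (j : ℕ) : A :=
  ((List.range (j - 1)).reverse.map (fun k => d.toWBC.sb (k + 1))).prod * d.xb1 *
    ((List.range (j - 1)).map (fun k => d.toWBC.sb (k + 1))).prod

/-- `x_i = x'_i - L_i`. -/
def xv (d : AWBC R A r t ω1) (i : ℕ) : A := d.xp i - d.toWBC.L i

/-- `x̄_j = x̄'_j - L̄_j`. -/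
def xbv (d : AWBC R A r t ω1) (j : ℕ) : A := d.xbp j - d.toWBC.Lb j

/-- `x^α = x_1^{α_1} ⋯ x_r^{α_r}`. -/
def xpow (d : AWBC R A r t ω1) (α : Fin r → ℕ) : A :=
  ((List.finRange r).map (fun (i : Fin r) => d.xv ((i : ℕ) + 1) ^ α i)).prod

/-- `x̄^β = x̄_1^{β_1} ⋯ x̄_t^{β_t}`. -/
def xbpow (d : AWBC R A r t ω1) (β : Fin t → ℕ) : A :=
  ((List.finRange t).map (fun (j : Fin t) => d.xbv ((j : ℕ) + 1) ^ β j)).prod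

/-- `∏_{n ∈ ℤ^{>0}} ω_{2n+1}^{a_{2n+1}}`, where `g i` is the exponent of `ω_{2(i+1)+1}`. -/
def ompow (d : AWBC R A r t ω1) (g : ℕ →₀ ℕ) : A :=
  ((g.support.sort (· ≤ ·)).map (fun n => d.om (2 * n + 3) ^ g n)).prod

/-- `z_i = x'_i + y_i`. -/
def z (d : AWBC R A r t ω1) (i : ℕ) : A := d.xp i + d.toWBC.y i

/-- `z̄_j = x̄'_j + ȳ_j`. -/
def zb (d : AWBC R A r t ω1) (j : ℕ) : A := d.xbp j + d.toWBC.yb j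

/-- Generators of the subalgebra `BC_{2,m,m}`-type subalgebra:
`e_1, s_1, …, s_{m-1}, s̄_1, …, s̄_{m-1}, c_1, c̄_1, x_1, x̄_1`. -/
def lowerGensA (d : AWBC R A r t ω1) (m : ℕ) : Set A :=
  d.toWBC.lowerGens m ∪ {x | 1 ≤ m ∧ (x = d.x1 ∨ x = d.xb1)}

end AWBC

/-- `φ` intertwines two sets of affine walled Brauer–Clifford data. -/
structure AWBCHom {R A B : Type} [CommRing R] [Ring A] [Algebra R A] [Ring B] [Algebra R B]
    {r t : ℕ} {ω1 : R} (d : AWBC R A r t ω1) (d' : AWBC R B r t ω1) (φ : A →ₐ[R] B) : Prop where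
  map_σ : ∀ w, φ (d.σ w) = d'.σ w
  map_σb : ∀ w, φ (d.σb w) = d'.σb w
  map_c : ∀ i, φ (d.c i) = d'.c i
  map_cb : ∀ j, φ (d.cb j) = d'.cb j
  map_e : φ d.e = d'.e
  map_x1 : φ d.x1 = d'.x1
  map_xb1 : φ d.xb1 = d'.xb1
  map_om : ∀ k, φ (d.om k) = d'.om k
  map_omb : ∀ k, φ (d.omb k) = d'.omb k

/-- `A` (with the data `d`) is the affine walled Brauer–Clifford superalgebra
`BC^aff_{r,t}` of Definition 3.1. -/
def AWBC.IsUniversal {R A : Type} [CommRing R] [Ring A] [Algebra R A] {r t : ℕ} {ω1 : R}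
    (d : AWBC R A r t ω1) : Prop :=
  ∀ (B : Type) [Ring B] [Algebra R B], ∀ d' : AWBC R B r t ω1,
    ∃! φ : A →ₐ[R] B, AWBCHom d d' φ

/-- Assumption 3.6: the parameters `ω̄` are determined by the `ω`'s as in Corollary 3.5. -/
def AWBC.Ass36 {R A : Type} [CommRing R] [Ring A] [Algebra R A] {r t : ℕ} {ω1 : R}
    (d : AWBC R A r t ω1) : Prop :=
  (∀ n, d.omb (2 * n) = 0) ∧
  (∀ n, d.omb (2 * n + 1) = ∑ j ∈ Finset.range (n + 1), acoef d.om n j * d.om (2 * j + 1))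

/-- `A` (with the data `d`) is the affine walled Brauer–Clifford superalgebra
`BC^aff_{r,t}` subject to Assumption 3.6. -/
def AWBC.IsUniversal36 {R A : Type} [CommRing R] [Ring A] [Algebra R A] {r t : ℕ} {ω1 : R}
    (d : AWBC R A r t ω1) : Prop :=
  d.Ass36 ∧ ∀ (B : Type) [Ring B] [Algebra R B], ∀ d' : AWBC R B r t ω1,
    d'.Ass36 → ∃! φ : A →ₐ[R] B, AWBCHom d d' φ

/-- The parameters `ω_k`, `ω̄_k` are the scalars `ω k`, `obar ω k` (specialization defining
the algebra `B̃C_{r,t}` of Definition 3.13). -/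
def AWBC.IsSpec {R A : Type} [CommRing R] [Ring A] [Algebra R A] {r t : ℕ} {ω1 : R}
    (d : AWBC R A r t ω1) (ω : ℕ → R) : Prop :=
  (∀ k, d.om k = algebraMap R A (ω k)) ∧ (∀ k, 1 ≤ k → d.omb k = algebraMap R A (obar ω k))

/-- `A` (with the data `d`) is the algebra `B̃C_{r,t}` of Definition 3.13 with parameters
`ω_{2n+1} ∈ R`. -/
def AWBC.IsSpecUniversal {R A : Type} [CommRing R] [Ring A] [Algebra R A] {r t : ℕ} {ω1 : R}
    (d : AWBC R A r t ω1) (ω : ℕ → R) : Prop :=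
  d.IsSpec ω ∧ ∀ (B : Type) [Ring B] [Algebra R B], ∀ d' : AWBC R B r t ω1,
    d'.IsSpec ω → ∃! φ : A →ₐ[R] B, AWBCHom d d' φ

/-- The cyclotomic relations `f(x_1) = 0` and `g(x̄_1) = 0`. -/
def AWBC.IsCyc {R A : Type} [CommRing R] [Ring A] [Algebra R A] {r t : ℕ} {ω1 : R}
    (d : AWBC R A r t ω1) (f g : Polynomial R) : Prop :=
  Polynomial.aeval d.x1 f = 0 ∧ Polynomial.aeval d.xb1 g = 0

/-- `A` (with the data `d`) is the cyclotomic walled Brauer–Clifford superalgebra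
`BC_{ℓ,r,t}` of Definition 3.14 attached to `f`, `g` and the scalar parameters `ω`. -/
def AWBC.IsCycUniversal {R A : Type} [CommRing R] [Ring A] [Algebra R A] {r t : ℕ} {ω1 : R}
    (d : AWBC R A r t ω1) (ω : ℕ → R) (f g : Polynomial R) : Prop :=
  d.IsSpec ω ∧ d.IsCyc f g ∧ ∀ (B : Type) [Ring B] [Algebra R B], ∀ d' : AWBC R B r t ω1,
    d'.IsSpec ω → d'.IsCyc f g → ∃! φ : A →ₐ[R] B, AWBCHom d d' φ

/-- Index of a regular monomial `x^α d x̄^β ∏_{n≥1} ω_{2n+1}^{a_{2n+1}}` of `BC^aff_{r,t}`. -/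
structure ARIndex (r t : ℕ) : Type where
  α : Fin r → ℕ
  β : Fin t → ℕ
  dIdx : BCIndex r t
  g : ℕ →₀ ℕ

/-- The regular monomial `x^α d x̄^β ∏_{n≥1} ω_{2n+1}^{a_{2n+1}}` of Definition 3.11. -/
def AWBC.regElt {R A : Type} [CommRing R] [Ring A] [Algebra R A] {r t : ℕ} {ω1 : R}
    (d : AWBC R A r t ω1) (x : ARIndex r t) : A :=
  d.xpow x.α * d.toWBC.basElt x.dIdx * d.xbpow x.β * d.ompow x.g

/-- Index of a regular monomial `x^α d x̄^β` of `B̃C_{r,t}`. -/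
structure SIndex (r t : ℕ) : Type where
  α : Fin r → ℕ
  β : Fin t → ℕ
  dIdx : BCIndex r t

/-- The regular monomial `x^α d x̄^β` of `B̃C_{r,t}`. -/
def AWBC.sregElt {R A : Type} [CommRing R] [Ring A] [Algebra R A] {r t : ℕ} {ω1 : R}
    (d : AWBC R A r t ω1) (x : SIndex r t) : A :=
  d.xpow x.α * d.toWBC.basElt x.dIdx * d.xbpow x.β

/-- Index of a regular monomial `x^α d x̄^β` of the level `ℓ` algebra `BC_{ℓ,r,t}`,
with exponents in `{0, 1, …, ℓ-1}`. -/
structure CIndex (r t ℓ : ℕ) : Type where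
  α : Fin r → Fin ℓ
  β : Fin t → Fin ℓ
  dIdx : BCIndex r t

/-- The regular monomial `x^α d x̄^β` of `BC_{ℓ,r,t}`. -/
def AWBC.cregElt {R A : Type} [CommRing R] [Ring A] [Algebra R A] {r t ℓ : ℕ} {ω1 : R}
    (d : AWBC R A r t ω1) (x : CIndex r t ℓ) : A :=
  d.xpow (fun i => (x.α i : ℕ)) * d.toWBC.basElt x.dIdx * d.xbpow (fun j => (x.β j : ℕ))

/-- Admissibility (Definition 6.4): writing `f(x) = x^{k+2m} + ∑_{i=1}^{2m} a_i x^{k+2m-i}`,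
one has `ω_L = -(a_1 ω_{L-1} + ⋯ + a_{2m} ω_{L-2m})` for all `L ≥ k + 2m`. -/
def AdmissibleParam {R : Type} [CommRing R] (ω : ℕ → R) (f : Polynomial R) (k m : ℕ) : Prop :=
  ∀ L, k + 2 * m ≤ L →
    ω L = -∑ i ∈ Finset.Icc 1 (2 * m), f.coeff (k + 2 * m - i) * ω (L - i)

/-- The parameters `ω_0 = 0`, `ω_1 = -2m(2p-2m+1)`, `ω_i = p(p+1) ω_{i-2}` of (4.16). -/
def omSeq (m : ℕ) (p : ℂ) : ℕ → ℂ
  | 0 => 0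
  | 1 => -2 * (m : ℂ) * (2 * p - 2 * (m : ℂ) + 1)
  | n + 2 => p * (p + 1) * omSeq m p n

/-- Index of a monomial `d_1^{-1} c^α x'^β e^f x̄'^{β̄} c̄^{ᾱ} w d_2` of (4.20). -/
structure L2Index (r t : ℕ) : Type where
  α : Fin r → Fin 2
  βx : Fin r → Fin 2
  αb : Fin t → Fin 2
  βxb : Fin t → Fin 2
  f : ℕ
  hf : f ≤ min r t
  d1 : DElt r t f
  d2 : DElt r t f
  w : Equiv.Perm (Fin r)
  wb : Equiv.Perm (Fin t)
  hw : ∀ i : Fin r, (i : ℕ) < f → w i = i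
  hwb : ∀ j : Fin t, (j : ℕ) < f → wb j = j

/-- The monomial `d_1^{-1} c^α x'^β e^f x̄'^{β̄} c̄^{ᾱ} w d_2` of (4.20), where
`x'^β = x'_r{}^{β_r} ⋯ x'_1{}^{β_1}` and `x̄'^{β̄} = x̄'_t{}^{β̄_t} ⋯ x̄'_1{}^{β̄_1}`. -/
def AWBC.l2Elt {R A : Type} [CommRing R] [Ring A] [Algebra R A] {r t : ℕ} {ω1 : R}
    (d : AWBC R A r t ω1) (x : L2Index r t) : A :=
  d.toWBC.σ (x.d1.pr⁻¹) * d.toWBC.σb (x.d1.pt⁻¹) * d.toWBC.cpow x.α *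
    ((List.finRange r).reverse.map (fun (i : Fin r) => d.xp ((i : ℕ) + 1) ^ (x.βx i : ℕ))).prod *
    d.toWBC.epow x.f *
    ((List.finRange t).reverse.map (fun (j : Fin t) => d.xbp ((j : ℕ) + 1) ^ (x.βxb j : ℕ))).prod *
    d.toWBC.cbpow x.αb *
    d.toWBC.σ x.w * d.toWBC.σb x.wb * d.toWBC.σ x.d2.pr * d.toWBC.σb x.d2.pt



namespace Prf
open Equiv

lemma sw_eq {n a b : ℕ} (ha : a < n) (hb : b < n) : sw n a b = Equiv.swap ⟨a, ha⟩ ⟨b, hb⟩ := by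
  unfold sw; rw [dif_pos ⟨ha, hb⟩]

lemma sw_mul_self (n a b : ℕ) : sw n a b * sw n a b = 1 := by
  unfold sw; split
  · exact Equiv.swap_mul_self _ _
  · simp

def adjSet (n a b : ℕ) : Set (Equiv.Perm (Fin n)) :=
  {g | ∃ i, a ≤ i ∧ i + 1 ≤ b ∧ g = sw n i (i + 1)}

lemma adjSet_mono {n a b a' b' : ℕ} (ha : a' ≤ a) (hb : b ≤ b') :
    adjSet n a b ⊆ adjSet n a' b' := by
  rintro g ⟨i, h1, h2, rfl⟩; exact ⟨i, le_trans ha h1, le_trans h2 hb, rfl⟩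

lemma adj_mem_closure {n : ℕ} : ∀ (y x : ℕ), x < y → y < n →
    sw n x y ∈ Subgroup.closure (adjSet n x y) := by
  intro y
  induction y using Nat.strong_induction_on with
  | _ y ih =>
    intro x hxy hy
    rcases Nat.lt_or_ge (x + 1) y with h | h
    · -- y ≥ x + 2 : sw n x y = sw n (y-1) y * sw n x (y-1) * sw n (y-1) y
      obtain ⟨m, rfl⟩ : ∃ m, y = m + 1 := ⟨y - 1, by omega⟩
      have hxm : x < m := by omega
      have hm : m < n := by omega
      have key : sw n x (m+1) = sw n m (m+1) * sw n x m * sw n m (m+1) := by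
        rw [sw_eq (show x < n by omega) (show m+1 < n from hy),
          sw_eq hm hy, sw_eq (show x < n by omega) hm]
        rw [Equiv.swap_mul_swap_mul_swap (by simp only [ne_eq, Fin.mk.injEq]; omega)
          (by simp only [ne_eq, Fin.mk.injEq]; omega)]
        rw [Equiv.swap_comm]
      rw [key]
      have hgen : sw n m (m+1) ∈ adjSet n x (m+1) := ⟨m, by omega, le_refl _, rfl⟩
      exact Subgroup.mul_mem _ (Subgroup.mul_mem _ (Subgroup.subset_closure hgen)
        (Subgroup.closure_mono (adjSet_mono (le_refl x) (by omega)) (ih m (by omega) x hxm hm)))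
        (Subgroup.subset_closure hgen)
    · have : y = x + 1 := by omega
      subst this
      exact Subgroup.subset_closure ⟨x, le_refl _, le_refl _, rfl⟩

lemma stab_aux {n : ℕ} (p : Fin n) :
    ∀ (m : ℕ) (w : Equiv.Perm (Fin n)), w.support.card ≤ m → w p = p →
    w ∈ Subgroup.closure {g | ∃ a b : Fin n, a ≠ p ∧ b ≠ p ∧ g = Equiv.swap a b} := by
  intro m
  induction m with
  | zero =>
    intro w hcard hw
    have : w = 1 := by
      rw [← Equiv.Perm.support_eq_empty_iff]
      exact Finset.card_eq_zero.mp (Nat.le_zero.mp hcard)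
    rw [this]; exact Subgroup.one_mem _
  | succ m ih =>
    intro w hcard hw
    by_cases h1 : w = 1
    · rw [h1]; exact Subgroup.one_mem _
    · obtain ⟨x, hx⟩ : ∃ x, w x ≠ x := by
        by_contra h; push_neg at h; exact h1 (Equiv.ext h)
      have hxp : x ≠ p := fun h => hx (by subst h; rw [hw])
      have hwxp : w x ≠ p := by
        intro h
        exact hxp (w.injective (by rw [h, hw]))
      have hlt := Equiv.Perm.card_support_swap_mul hx
      have hp' : (Equiv.swap x (w x) * w) p = p := by
        simp [hw, Equiv.swap_apply_of_ne_of_ne hxp.symm hwxp.symm]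
      have hmem := ih (Equiv.swap x (w x) * w) (by omega) hp'
      have hgen : Equiv.swap x (w x) ∈
          {g | ∃ a b : Fin n, a ≠ p ∧ b ≠ p ∧ g = Equiv.swap a b} := ⟨x, w x, hxp, hwxp, rfl⟩
      have : w = Equiv.swap x (w x) * (Equiv.swap x (w x) * w) := by
        rw [← mul_assoc, Equiv.swap_mul_self, one_mul]
      rw [this]
      exact Subgroup.mul_mem _ (Subgroup.subset_closure hgen) hmem

/-- swaps avoiding a point `p`, expressed via closure of sets. -/
lemma swap_avoid_mem {n : ℕ} {a b : Fin n} {lo hi : ℕ} (ha1 : lo ≤ a.1) (ha2 : a.1 ≤ hi)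
    (hb1 : lo ≤ b.1) (hb2 : b.1 ≤ hi) :
    Equiv.swap a b ∈ Subgroup.closure (adjSet n lo hi) := by
  rcases lt_trichotomy a.1 b.1 with h | h | h
  · have : Equiv.swap a b = sw n a.1 b.1 := by
      rw [sw_eq a.2 b.2]
    rw [this]
    exact Subgroup.closure_mono (adjSet_mono ha1 hb2) (adj_mem_closure b.1 a.1 h b.2)
  · have : a = b := Fin.ext h
    rw [this, Equiv.swap_self]
    exact Subgroup.one_mem _
  · have : Equiv.swap a b = sw n b.1 a.1 := by
      rw [sw_eq b.2 a.2, Equiv.swap_comm]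
    rw [this]
    exact Subgroup.closure_mono (adjSet_mono hb1 ha2) (adj_mem_closure a.1 b.1 h a.2)

lemma stab_zero {n : ℕ} (hn : 1 ≤ n) (w : Equiv.Perm (Fin n)) (hw : w ⟨0, by omega⟩ = ⟨0, by omega⟩) :
    w ∈ Subgroup.closure (adjSet n 1 (n-1)) := by
  have h := stab_aux (⟨0, by omega⟩ : Fin n) w.support.card w (le_refl _) hw
  refine Subgroup.closure_le (Subgroup.closure (adjSet n 1 (n-1))) |>.mpr ?_ h
  rintro g ⟨a, b, hap, hbp, rfl⟩
  have ha : 1 ≤ a.1 := by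
    rcases Nat.eq_zero_or_pos a.1 with h | h
    · exact absurd (Fin.ext h) hap
    · exact h
  have hb : 1 ≤ b.1 := by
    rcases Nat.eq_zero_or_pos b.1 with h | h
    · exact absurd (Fin.ext h) hbp
    · exact h
  exact swap_avoid_mem ha (by omega : a.1 ≤ n - 1) hb (by omega : b.1 ≤ n - 1)

lemma stab_last {n : ℕ} (hn : 2 ≤ n) (w : Equiv.Perm (Fin n))
    (hw : w ⟨n-1, by omega⟩ = ⟨n-1, by omega⟩) :
    w ∈ Subgroup.closure (adjSet n 0 (n-2)) := by
  have h := stab_aux (⟨n-1, by omega⟩ : Fin n) w.support.card w (le_refl _) hw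
  refine Subgroup.closure_le (Subgroup.closure (adjSet n 0 (n-2))) |>.mpr ?_ h
  rintro g ⟨a, b, hap, hbp, rfl⟩
  have ha : a.1 ≤ n - 2 := by
    have := a.2
    have : a.1 ≠ n - 1 := fun h => hap (Fin.ext h)
    omega
  have hb : b.1 ≤ n - 2 := by
    have := b.2
    have : b.1 ≠ n - 1 := fun h => hbp (Fin.ext h)
    omega
  exact swap_avoid_mem (Nat.zero_le _) ha (Nat.zero_le _) hb

lemma closure_ind {n : ℕ} {S : Set (Equiv.Perm (Fin n))} (hS : ∀ s ∈ S, s * s = 1)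
    {P : Equiv.Perm (Fin n) → Prop} (h1 : P 1) (hmul : ∀ x y, P x → P y → P (x * y))
    (hg : ∀ s ∈ S, P s) : ∀ w ∈ Subgroup.closure S, P w := by
  intro w hw
  have key : P w ∧ P w⁻¹ := by
    induction hw using Subgroup.closure_induction with
    | mem x hx =>
      have hinv : x⁻¹ = x := inv_eq_of_mul_eq_one_right (hS x hx)
      exact ⟨hg x hx, hinv ▸ hg x hx⟩
    | one => exact ⟨h1, by rw [inv_one]; exact h1⟩
    | mul x y hx hy hpx hpy =>
      refine ⟨hmul _ _ hpx.1 hpy.1, ?_⟩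
      rw [mul_inv_rev]; exact hmul _ _ hpy.2 hpx.2
    | inv x hx hpx => exact ⟨hpx.2, by rw [inv_inv]; exact hpx.1⟩
  exact key.1

end Prf
namespace Prf
open Equiv
variable {R A : Type} [CommRing R] [Ring A] [Algebra R A]

def fullGens {r t : ℕ} (d : WBC R A r t) : Set A :=
  Set.range d.σ ∪ Set.range d.σb ∪ Set.range d.c ∪ Set.range d.cb ∪ {d.e}

variable {r t : ℕ} (d : WBC R A r t)

lemma mem_fg_σ (w : Perm (Fin r)) : d.σ w ∈ fullGens d :=
  Or.inl (Or.inl (Or.inl (Or.inl ⟨w, rfl⟩)))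
lemma mem_fg_σb (w : Perm (Fin t)) : d.σb w ∈ fullGens d :=
  Or.inl (Or.inl (Or.inl (Or.inr ⟨w, rfl⟩)))
lemma mem_fg_c (i : Fin r) : d.c i ∈ fullGens d :=
  Or.inl (Or.inl (Or.inr ⟨i, rfl⟩))
lemma mem_fg_cb (j : Fin t) : d.cb j ∈ fullGens d :=
  Or.inl (Or.inr ⟨j, rfl⟩)
lemma mem_fg_e : d.e ∈ fullGens d := Or.inr rfl

def resσ : Perm (Fin r) →* ↥(Algebra.adjoin R (fullGens d)) where
  toFun := fun w => ⟨d.σ w, Algebra.subset_adjoin (mem_fg_σ d w)⟩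
  map_one' := Subtype.ext (map_one d.σ)
  map_mul' := fun x y => Subtype.ext (map_mul d.σ x y)

def resσb : Perm (Fin t) →* ↥(Algebra.adjoin R (fullGens d)) where
  toFun := fun w => ⟨d.σb w, Algebra.subset_adjoin (mem_fg_σb d w)⟩
  map_one' := Subtype.ext (map_one d.σb)
  map_mul' := fun x y => Subtype.ext (map_mul d.σb x y)

/-- The restriction of the WBC data to the subalgebra generated by the generators. -/
def restrictWBC : WBC R (↥(Algebra.adjoin R (fullGens d))) r t where
  σ := resσ d
  σb := resσb d
  c := fun i => ⟨d.c i, Algebra.subset_adjoin (mem_fg_c d i)⟩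
  cb := fun j => ⟨d.cb j, Algebra.subset_adjoin (mem_fg_cb d j)⟩
  e := ⟨d.e, Algebra.subset_adjoin (mem_fg_e d)⟩
  c_sq := fun i => Subtype.ext (by push_cast; exact d.c_sq i)
  c_anti := fun i j h => Subtype.ext (by push_cast; exact d.c_anti i j h)
  c_conj := fun w i => Subtype.ext (by push_cast; exact d.c_conj w i)
  cb_sq := fun i => Subtype.ext (by push_cast; exact d.cb_sq i)
  cb_anti := fun i j h => Subtype.ext (by push_cast; exact d.cb_anti i j h)
  cb_conj := fun w i => Subtype.ext (by push_cast; exact d.cb_conj w i)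
  comm_σσb := fun w v => Subtype.ext (by push_cast; exact d.comm_σσb w v)
  comm_σcb := fun w j => Subtype.ext (by push_cast; exact d.comm_σcb w j)
  comm_σbc := fun v i => Subtype.ext (by push_cast; exact d.comm_σbc v i)
  anti_ccb := fun i j => Subtype.ext (by push_cast; exact d.anti_ccb i j)
  e_c1 := fun h1 h2 => Subtype.ext (by push_cast; exact d.e_c1 h1 h2)
  c1_e := fun h1 h2 => Subtype.ext (by push_cast; exact d.c1_e h1 h2)
  e_sq := Subtype.ext (by push_cast; exact d.e_sq)
  e_s_e := fun h => Subtype.ext (by push_cast; exact d.e_s_e h)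
  e_sb_e := fun h => Subtype.ext (by push_cast; exact d.e_sb_e h)
  s_e_comm := fun i h1 h2 => Subtype.ext (by push_cast; exact d.s_e_comm i h1 h2)
  sb_e_comm := fun j h1 h2 => Subtype.ext (by push_cast; exact d.sb_e_comm j h1 h2)
  braid1 := fun h1 h2 => Subtype.ext (by push_cast; exact d.braid1 h1 h2)
  braid2 := fun h1 h2 => Subtype.ext (by push_cast; exact d.braid2 h1 h2)
  c_e_comm := fun i h => Subtype.ext (by push_cast; exact d.c_e_comm i h)
  cb_e_comm := fun j h => Subtype.ext (by push_cast; exact d.cb_e_comm j h)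
  e_c_e := fun h => Subtype.ext (by push_cast; exact d.e_c_e h)
  e_cb_e := fun h => Subtype.ext (by push_cast; exact d.e_cb_e h)

lemma mem_adjoin_fullGens (hu : d.IsUniversal) (a : A) :
    a ∈ Algebra.adjoin R (fullGens d) := by
  obtain ⟨φ, hφ, _⟩ := hu (↥(Algebra.adjoin R (fullGens d))) (restrictWBC d)
  obtain ⟨ψ, hψ, huniq⟩ := hu A d
  have h1 : WBCHom d d ((Algebra.adjoin R (fullGens d)).val.comp φ) := by
    refine ⟨fun w => ?_, fun w => ?_, fun i => ?_, fun j => ?_, ?_⟩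
    · show ((φ (d.σ w) : _) : A) = d.σ w
      rw [hφ.map_σ w]; simp [restrictWBC, resσ]
    · show ((φ (d.σb w) : _) : A) = d.σb w
      rw [hφ.map_σb w]; simp [restrictWBC, resσb]
    · show ((φ (d.c i) : _) : A) = d.c i
      rw [hφ.map_c i]; simp [restrictWBC]
    · show ((φ (d.cb j) : _) : A) = d.cb j
      rw [hφ.map_cb j]; simp [restrictWBC]
    · show ((φ d.e : _) : A) = d.e
      rw [hφ.map_e]; simp [restrictWBC]
  have h2 : WBCHom d d (AlgHom.id R A) :=
    ⟨fun _ => rfl, fun _ => rfl, fun _ => rfl, fun _ => rfl, rfl⟩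
  have heq := (huniq _ h1).trans (huniq _ h2).symm
  have := DFunLike.congr_fun heq a
  simp only [AlgHom.coe_comp, Function.comp_apply, AlgHom.coe_id, id_eq] at this
  rw [← this]
  exact SetLike.coe_mem (φ a)

end Prf
namespace Prf
open Equiv
variable {R A : Type} [CommRing R] [Ring A] [Algebra R A]

section K1
variable (d : WBC R A 1 1)

private def Fone : Fin 1 := ⟨0, one_pos⟩

lemma k1_main (hu : d.IsUniversal) (a : A) : d.e * a * d.e = 0 := by
  have hc1 : d.e * d.c Fone = d.e * d.cb Fone := d.e_c1 one_pos one_pos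
  have hcsq : d.c Fone * d.c Fone = -1 := d.c_sq Fone
  have hcbsq : d.cb Fone * d.cb Fone = 1 := d.cb_sq Fone
  have hece : d.e * d.c Fone * d.e = 0 := d.e_c_e one_pos
  set W : Submodule R A := Submodule.span R {d.e, d.e * d.c Fone} with hW
  have heW : d.e ∈ W := Submodule.subset_span (Or.inl rfl)
  have hecW : d.e * d.c Fone ∈ W := Submodule.subset_span (Or.inr rfl)
  -- W is stable under right multiplication by the generators
  have hWg : ∀ g ∈ fullGens d, ∀ v ∈ W, v * g ∈ W := by
    intro g hg v hv
    induction hv using Submodule.span_induction with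
    | mem x hx =>
      have hx' : x = d.e ∨ x = d.e * d.c Fone := hx
      rcases hg with (((⟨w, rfl⟩ | ⟨w, rfl⟩) | ⟨i, rfl⟩) | ⟨j, rfl⟩) | hg
      · rw [Subsingleton.elim w 1, map_one, mul_one]
        rcases hx' with rfl | rfl
        · exact heW
        · exact hecW
      · rw [Subsingleton.elim w 1, map_one, mul_one]
        rcases hx' with rfl | rfl
        · exact heW
        · exact hecW
      · rw [Subsingleton.elim i Fone]
        rcases hx' with rfl | rfl
        · exact hecW
        · rw [mul_assoc, hcsq, mul_neg, mul_one]
          exact W.neg_mem heW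
      · rw [Subsingleton.elim j Fone]
        rcases hx' with rfl | rfl
        · rw [← hc1]
          exact hecW
        · rw [hc1, mul_assoc, hcbsq, mul_one]
          exact heW
      · rw [hg]
        rcases hx' with rfl | rfl
        · rw [d.e_sq]; exact W.zero_mem
        · rw [hece]; exact W.zero_mem
    | zero => rw [zero_mul]; exact W.zero_mem
    | add x y _ _ hx hy => rw [add_mul]; exact W.add_mem hx hy
    | smul r x _ hx => rw [smul_mul_assoc]; exact W.smul_mem r hx
  -- hence e * a ∈ W for a in the adjoin, and W * e = 0
  have hWe : ∀ v ∈ W, v * d.e = 0 := by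
    intro v hv
    induction hv using Submodule.span_induction with
    | mem x hx =>
      rcases hx with rfl | rfl
      · exact d.e_sq
      · exact hece
    | zero => rw [zero_mul]
    | add x y _ _ hx hy => rw [add_mul, hx, hy, add_zero]
    | smul r x _ hx => rw [smul_mul_assoc, hx, smul_zero]
  have ha : a ∈ Algebra.adjoin R (fullGens d) := mem_adjoin_fullGens d hu a
  have key : ∀ v ∈ W, v * a ∈ W := by
    induction ha using Algebra.adjoin_induction with
    | mem x hx => exact fun v hv => hWg x hx v hv
    | algebraMap r =>
      intro v hv
      rw [← Algebra.commutes r v, ← Algebra.smul_def]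
      exact W.smul_mem r hv
    | add x y _ _ hx hy =>
      intro v hv
      rw [mul_add]
      exact W.add_mem (hx v hv) (hy v hv)
    | mul x y _ _ hx hy =>
      intro v hv
      rw [← mul_assoc]
      exact hy _ (hx v hv)
  exact hWe _ (key d.e heW)

end K1
end Prf
namespace Prf
open Equiv
variable {R A : Type} [CommRing R] [Ring A] [Algebra R A]

/-- semiconjugation with a trailing factor -/
lemma shz {a b b' : A} (h : a * b = b' * a) (z : A) : a * (b * z) = b' * (a * z) := by
  rw [← mul_assoc, h, mul_assoc]

section K2
variable {m : ℕ} (d : WBC R A (m+2) (m+2))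

def F0 : Fin (m+2) := ⟨0, by omega⟩
def FL : Fin (m+2) := ⟨m+1, by omega⟩
def F1' : Fin (m+2) := ⟨1, by omega⟩

lemma F0_ne_FL : (F0 : Fin (m+2)) ≠ FL := by simp only [F0, FL, ne_eq, Fin.mk.injEq]; omega

def sig0 : Perm (Fin (m+2)) := Equiv.swap F0 FL

/-- `e_{k,k}` in right-associated normal form. -/
def EE : A := d.σ sig0 * (d.σb sig0 * (d.e * (d.σ sig0 * d.σb sig0)))

def E0 (i j : Fin (m+2)) : A :=
  d.σ (Equiv.swap F0 i) * (d.σb (Equiv.swap F0 j) * (d.e *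
    (d.σ (Equiv.swap F0 i) * d.σb (Equiv.swap F0 j))))

def LL : Subalgebra R A := Algebra.adjoin R (d.lowerGens (m+1))

-- merging of permutation images
lemma σσ (x y : Perm (Fin (m+2))) (z : A) : d.σ x * (d.σ y * z) = d.σ (x*y) * z := by
  rw [← mul_assoc, ← map_mul]
lemma σbσb (x y : Perm (Fin (m+2))) (z : A) : d.σb x * (d.σb y * z) = d.σb (x*y) * z := by
  rw [← mul_assoc, ← map_mul]
lemma σσ' (x y : Perm (Fin (m+2))) : d.σ x * d.σ y = d.σ (x*y) := (map_mul _ _ _).symm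
lemma σbσb' (x y : Perm (Fin (m+2))) : d.σb x * d.σb y = d.σb (x*y) := (map_mul _ _ _).symm

-- conjugation of the Clifford generators
lemma sc (w : Perm (Fin (m+2))) (i : Fin (m+2)) : d.σ w * d.c i = d.c (w i) * d.σ w := by
  have h := d.c_conj w i
  calc d.σ w * d.c i = d.σ w * d.c i * (d.σ w⁻¹ * d.σ w) := by
        rw [← map_mul, inv_mul_cancel, map_one, mul_one]
    _ = d.σ w * d.c i * d.σ w⁻¹ * d.σ w := by rw [← mul_assoc]
    _ = d.c (w i) * d.σ w := by rw [h]

lemma cs (w : Perm (Fin (m+2))) (i : Fin (m+2)) : d.c i * d.σ w = d.σ w * d.c (w⁻¹ i) := by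
  have := sc d w (w⁻¹ i)
  rw [← Equiv.Perm.mul_apply, mul_inv_cancel, Equiv.Perm.one_apply] at this
  exact this.symm

lemma sbcb (w : Perm (Fin (m+2))) (i : Fin (m+2)) : d.σb w * d.cb i = d.cb (w i) * d.σb w := by
  have h := d.cb_conj w i
  calc d.σb w * d.cb i = d.σb w * d.cb i * (d.σb w⁻¹ * d.σb w) := by
        rw [← map_mul, inv_mul_cancel, map_one, mul_one]
    _ = d.σb w * d.cb i * d.σb w⁻¹ * d.σb w := by rw [← mul_assoc]
    _ = d.cb (w i) * d.σb w := by rw [h]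

lemma cbsb (w : Perm (Fin (m+2))) (i : Fin (m+2)) : d.cb i * d.σb w = d.σb w * d.cb (w⁻¹ i) := by
  have := sbcb d w (w⁻¹ i)
  rw [← Equiv.Perm.mul_apply, mul_inv_cancel, Equiv.Perm.one_apply] at this
  exact this.symm

lemma cbc (i j : Fin (m+2)) : d.cb j * d.c i = -(d.c i * d.cb j) := by
  rw [d.anti_ccb i j, neg_neg]

-- σ of permutations fixing F0 commute with e
lemma σ_e_comm (w : Perm (Fin (m+2))) (hw : w F0 = F0) : d.σ w * d.e = d.e * d.σ w := by
  refine closure_ind (P := fun w => d.σ w * d.e = d.e * d.σ w)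
    (fun s hs => ?_) ?_ ?_ ?_ w (stab_zero (by omega) w hw)
  · obtain ⟨i, _, _, rfl⟩ := hs; exact sw_mul_self _ _ _
  · show d.σ 1 * d.e = d.e * d.σ 1
    rw [map_one, one_mul, mul_one]
  · intro x y hx hy
    show d.σ (x * y) * d.e = d.e * d.σ (x * y)
    rw [map_mul, mul_assoc, hy, ← mul_assoc, hx, mul_assoc]
  · rintro s ⟨i, h1, h2, rfl⟩
    exact d.s_e_comm i h1 (by omega)

lemma σb_e_comm (w : Perm (Fin (m+2))) (hw : w F0 = F0) : d.σb w * d.e = d.e * d.σb w := by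
  refine closure_ind (P := fun w => d.σb w * d.e = d.e * d.σb w)
    (fun s hs => ?_) ?_ ?_ ?_ w (stab_zero (by omega) w hw)
  · obtain ⟨i, _, _, rfl⟩ := hs; exact sw_mul_self _ _ _
  · show d.σb 1 * d.e = d.e * d.σb 1
    rw [map_one, one_mul, mul_one]
  · intro x y hx hy
    show d.σb (x * y) * d.e = d.e * d.σb (x * y)
    rw [map_mul, mul_assoc, hy, ← mul_assoc, hx, mul_assoc]
  · rintro s ⟨i, h1, h2, rfl⟩
    exact d.sb_e_comm i h1 (by omega)

lemma sig0_sq : (sig0 : Perm (Fin (m+2))) * sig0 = 1 := Equiv.swap_mul_self _ _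

-- σ of permutations fixing FL commute with EE
lemma σ_EE_comm (w : Perm (Fin (m+2))) (hw : w FL = FL) : d.σ w * EE d = EE d * d.σ w := by
  have hw0 : (sig0 * w * sig0 : Perm (Fin (m+2))) F0 = F0 := by
    simp only [Equiv.Perm.mul_apply, sig0, Equiv.swap_apply_left, hw, Equiv.swap_apply_right]
  have h1 : w * sig0 = sig0 * (sig0 * w * sig0) := by
    rw [← mul_assoc, ← mul_assoc, sig0_sq, one_mul]
  have h2 : sig0 * w * sig0 * sig0 = sig0 * w := by rw [mul_assoc, sig0_sq, mul_one]
  unfold EE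
  rw [σσ, h1, ← σσ' d sig0 (sig0 * w * sig0), mul_assoc,
    shz (d.comm_σσb (sig0 * w * sig0) sig0),
    shz (σ_e_comm d _ hw0), σσ d (sig0 * w * sig0) sig0, h2, ← σσ' d sig0 w,
    mul_assoc (d.σ sig0) (d.σ w) (d.σb sig0), d.comm_σσb w sig0]
  simp only [mul_assoc]

lemma σb_EE_comm (w : Perm (Fin (m+2))) (hw : w FL = FL) : d.σb w * EE d = EE d * d.σb w := by
  have hw0 : (sig0 * w * sig0 : Perm (Fin (m+2))) F0 = F0 := by
    simp only [Equiv.Perm.mul_apply, sig0, Equiv.swap_apply_left, hw, Equiv.swap_apply_right]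
  have h1 : w * sig0 = sig0 * (sig0 * w * sig0) := by
    rw [← mul_assoc, ← mul_assoc, sig0_sq, one_mul]
  have h2 : sig0 * w * sig0 * sig0 = sig0 * w := by rw [mul_assoc, sig0_sq, mul_one]
  unfold EE
  rw [shz ((d.comm_σσb sig0 w).symm), σbσb, h1, ← σbσb' d sig0 (sig0 * w * sig0), mul_assoc,
    shz (σb_e_comm d _ hw0), shz ((d.comm_σσb sig0 (sig0 * w * sig0)).symm),
    σbσb' d (sig0 * w * sig0) sig0, h2, ← σbσb' d sig0 w]
  simp only [mul_assoc]

end K2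
end Prf
namespace Prf
open Equiv
variable {R A : Type} [CommRing R] [Ring A] [Algebra R A]

lemma shz2 {a b a' b' : A} (h : a * b = b' * a') (z : A) : a * (b * z) = b' * (a' * z) := by
  rw [← mul_assoc, h, mul_assoc]

section K2
variable {m : ℕ} (d : WBC R A (m+2) (m+2))

lemma sig0_inv : (sig0 : Perm (Fin (m+2)))⁻¹ = sig0 := Equiv.swap_inv _ _

lemma sig0_F0 : (sig0 : Perm (Fin (m+2))) F0 = FL := Equiv.swap_apply_left _ _
lemma sig0_FL : (sig0 : Perm (Fin (m+2))) FL = F0 := Equiv.swap_apply_right _ _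
lemma sig0_other {i : Fin (m+2)} (h0 : i ≠ F0) (hL : i ≠ FL) :
    (sig0 : Perm (Fin (m+2))) i = i := Equiv.swap_apply_of_ne_of_ne h0 hL

lemma val_ne_zero {i : Fin (m+2)} (h : i ≠ F0) : (i : ℕ) ≠ 0 := by
  intro hv; exact h (Fin.ext hv)

lemma sig0_ne_F0 {i : Fin (m+2)} (hi : i ≠ FL) : (sig0 : Perm (Fin (m+2))) i ≠ F0 := by
  intro h
  apply hi
  have : (sig0 : Perm (Fin (m+2))) (sig0 i) = sig0 F0 := congrArg _ h
  simpa only [sig0, Equiv.swap_apply_self, Equiv.swap_apply_left] using this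

-- c i commutes with EE for i ≠ FL
lemma c_EE_comm (i : Fin (m+2)) (hi : i ≠ FL) : d.c i * EE d = EE d * d.c i := by
  have h1 : (sig0⁻¹ : Perm (Fin (m+2))) i = sig0 i := by rw [sig0_inv]
  have h2 : ((sig0 : Perm (Fin (m+2))) i : ℕ) ≠ 0 := val_ne_zero (sig0_ne_F0 hi)
  have h3 : (sig0⁻¹ : Perm (Fin (m+2))) (sig0 i) = i := Equiv.symm_apply_apply _ _
  unfold EE
  rw [shz2 (cs d sig0 i), h1, shz2 ((d.comm_σbc sig0 (sig0 i)).symm),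
    shz2 (d.c_e_comm _ h2), shz2 (cs d sig0 (sig0 i)), h3, (d.comm_σbc sig0 i).symm]
  simp only [mul_assoc]

lemma cb_EE_comm (i : Fin (m+2)) (hi : i ≠ FL) : d.cb i * EE d = EE d * d.cb i := by
  have h1 : (sig0⁻¹ : Perm (Fin (m+2))) i = sig0 i := by rw [sig0_inv]
  have h2 : ((sig0 : Perm (Fin (m+2))) i : ℕ) ≠ 0 := val_ne_zero (sig0_ne_F0 hi)
  have h3 : (sig0⁻¹ : Perm (Fin (m+2))) (sig0 i) = i := Equiv.symm_apply_apply _ _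
  unfold EE
  rw [shz2 ((d.comm_σcb sig0 i).symm), shz2 (cbsb d sig0 i), h1,
    shz2 (d.cb_e_comm _ h2), shz2 ((d.comm_σcb sig0 (sig0 i)).symm),
    cbsb d sig0 (sig0 i), h3]
  simp only [mul_assoc]

-- c_FL · EE = cb_FL · EE  and  EE · c_FL = EE · cb_FL
lemma cL_EE : d.c FL * EE d = d.cb FL * EE d := by
  have hbL : (sig0⁻¹ : Perm (Fin (m+2))) FL = F0 := by rw [sig0_inv]; exact sig0_FL
  have hbF : (sig0⁻¹ : Perm (Fin (m+2))) F0 = FL := by rw [sig0_inv]; exact sig0_F0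
  have hc1e : d.c F0 * d.e = d.cb F0 * d.e := d.c1_e (by omega) (by omega)
  unfold EE
  rw [shz2 (cs d sig0 FL), hbL, shz2 ((d.comm_σbc sig0 F0).symm), shz2 hc1e,
    shz2 ((d.comm_σcb sig0 FL).symm), shz2 (cbsb d sig0 FL), hbL]

lemma EE_cL : EE d * d.c FL = EE d * d.cb FL := by
  have hbL : (sig0 : Perm (Fin (m+2))) FL = F0 := sig0_FL
  have hbF : (sig0⁻¹ : Perm (Fin (m+2))) F0 = FL := by rw [sig0_inv]; exact sig0_F0
  have hc1e : d.e * d.c F0 = d.e * d.cb F0 := d.e_c1 (by omega) (by omega)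
  unfold EE
  simp only [mul_assoc]
  rw [d.comm_σbc sig0 FL, shz2 (sc d sig0 FL), hbL, shz2 hc1e,
    shz2 ((d.comm_σcb sig0 F0).symm), cbsb d sig0 F0, hbF]

end K2
end Prf
namespace Prf
open Equiv
variable {R A : Type} [CommRing R] [Ring A] [Algebra R A]

section K2
variable {m : ℕ} (d : WBC R A (m+2) (m+2))

lemma EE_sq : EE d * EE d = 0 := by
  unfold EE
  simp only [mul_assoc]
  rw [shz2 ((d.comm_σσb sig0 sig0).symm), σσ d sig0 sig0, sig0_sq, map_one, one_mul,
    σbσb d sig0 sig0, sig0_sq, map_one, one_mul, ← mul_assoc d.e d.e, d.e_sq, zero_mul,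
    mul_zero, mul_zero]

lemma EE_cbL_EE : EE d * (d.cb FL * EE d) = 0 := by
  have hbL0 : (sig0⁻¹ : Perm (Fin (m+2))) FL = F0 := by rw [sig0_inv]; exact sig0_FL
  have hecbe : d.e * d.cb F0 * d.e = 0 := d.e_cb_e (by omega)
  have h0 : d.e * (d.cb F0 * (d.e * (d.σ sig0 * d.σb sig0))) = 0 := by
    rw [← mul_assoc, ← mul_assoc, hecbe, zero_mul]
  unfold EE
  simp only [mul_assoc]
  rw [shz2 ((d.comm_σcb sig0 FL).symm), shz2 (cbsb d sig0 FL), hbL0,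
    shz2 ((d.comm_σσb sig0 sig0).symm), σσ d sig0 sig0, sig0_sq, map_one, one_mul,
    σbσb d sig0 sig0, sig0_sq, map_one, one_mul, h0, mul_zero, mul_zero]

lemma EE_cL_EE : EE d * (d.c FL * EE d) = 0 := by
  rw [cL_EE d]
  exact EE_cbL_EE d

lemma cbL_pow (b : ℕ) : d.cb FL ^ b = d.cb FL ^ (b % 2) := by
  induction b using Nat.strong_induction_on with
  | _ b ih =>
    match b with
    | 0 => rfl
    | 1 => rfl
    | (b+2) =>
      rw [pow_succ, pow_succ, mul_assoc, d.cb_sq FL, mul_one, ih b (by omega),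
        Nat.add_mod_right]

lemma cL_pow (a : ℕ) : d.c FL ^ a = (-1 : A) ^ (a / 2) * d.c FL ^ (a % 2) := by
  induction a using Nat.strong_induction_on with
  | _ a ih =>
    match a with
    | 0 => simp
    | 1 => simp
    | (a+2) =>
      rw [pow_succ, pow_succ, mul_assoc, d.c_sq FL, ih a (by omega),
        Nat.add_mod_right, show (a+2)/2 = a/2 + 1 by omega, pow_succ]
      simp only [mul_assoc, mul_neg_one, mul_neg, neg_mul, mul_one, one_mul]

lemma EGE (a b : ℕ) : EE d * (d.c FL ^ a * (d.cb FL ^ b * EE d)) = 0 := by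
  rw [cL_pow, cbL_pow, mul_assoc ((-1 : A) ^ (a / 2)) _ _,
    shz2 (((Commute.neg_one_left (EE d)).pow_left (a/2)).eq.symm)]
  rcases Nat.mod_two_eq_zero_or_one a with h | h <;>
    rcases Nat.mod_two_eq_zero_or_one b with h' | h' <;>
      rw [h, h'] <;> simp only [pow_zero, pow_one, one_mul]
  · rw [EE_sq d, mul_zero]
  · rw [EE_cbL_EE d, mul_zero]
  · rw [EE_cL_EE d, mul_zero]
  · rw [← cL_EE d, ← mul_assoc (d.c FL) (d.c FL), d.c_sq FL, neg_one_mul, mul_neg,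
      EE_sq d, neg_zero, mul_zero]

end K2
end Prf
namespace Prf
open Equiv
variable {R A : Type} [CommRing R] [Ring A] [Algebra R A]

section K2
variable {m : ℕ} (d : WBC R A (m+2) (m+2))

lemma E0_FL_FL : E0 d FL FL = EE d := rfl

/-- moving `e` to the left through permutation images -/
lemma move_e (v vb : Perm (Fin (m+2))) (z : A) :
    d.σ v * (d.σb vb * (d.e * z)) =
      E0 d (v F0) (vb F0) * (d.σ v * (d.σb vb * z)) := by
  have hv : (Equiv.swap F0 (v F0) * v : Perm (Fin (m+2))) F0 = F0 := by
    rw [Equiv.Perm.mul_apply]; exact Equiv.swap_apply_right _ _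
  have hvb : (Equiv.swap F0 (vb F0) * vb : Perm (Fin (m+2))) F0 = F0 := by
    rw [Equiv.Perm.mul_apply]; exact Equiv.swap_apply_right _ _
  have hmerge : Equiv.swap F0 (v F0) * (Equiv.swap F0 (v F0) * v) = v := by
    rw [← mul_assoc, Equiv.swap_mul_self, one_mul]
  have hmergeb : Equiv.swap F0 (vb F0) * (Equiv.swap F0 (vb F0) * vb) = vb := by
    rw [← mul_assoc, Equiv.swap_mul_self, one_mul]
  symm
  unfold E0
  simp only [mul_assoc]
  rw [shz2 ((d.comm_σσb v (Equiv.swap F0 (vb F0))).symm),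
    σσ d (Equiv.swap F0 (v F0)) v, σbσb d (Equiv.swap F0 (vb F0)) vb,
    shz2 ((σ_e_comm d _ hv).symm), shz2 ((σb_e_comm d _ hvb).symm),
    shz2 ((d.comm_σσb (Equiv.swap F0 (v F0) * v) (Equiv.swap F0 (vb F0))).symm),
    σσ d (Equiv.swap F0 (v F0)) (Equiv.swap F0 (v F0) * v), hmerge,
    σbσb d (Equiv.swap F0 (vb F0)) (Equiv.swap F0 (vb F0) * vb), hmergeb]

lemma F0_ne_F1' : (F0 : Fin (m+2)) ≠ F1' := by
  simp only [F0, F1', ne_eq, Fin.mk.injEq]; omega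

lemma e_swap_e (i : Fin (m+2)) (hi : i ≠ F0) :
    d.e * (d.σ (Equiv.swap F0 i) * d.e) = d.e := by
  have hu0 : (Equiv.swap F1' i : Perm (Fin (m+2))) F0 = F0 :=
    Equiv.swap_apply_of_ne_of_ne F0_ne_F1' (Ne.symm hi)
  have hkey : (Equiv.swap F0 i : Perm (Fin (m+2))) =
      Equiv.swap F1' i * Equiv.swap F0 F1' * Equiv.swap F1' i := by
    have h2 : (Equiv.swap F1' i : Perm (Fin (m+2))) F1' = i := Equiv.swap_apply_left _ _
    calc (Equiv.swap F0 i : Perm (Fin (m+2)))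
        = Equiv.swap ((Equiv.swap F1' i : Perm (Fin (m+2))) F0)
            ((Equiv.swap F1' i : Perm (Fin (m+2))) F1') := by rw [hu0, h2]
      _ = Equiv.swap F1' i * Equiv.swap F0 F1' * (Equiv.swap F1' i)⁻¹ :=
          Equiv.swap_apply_apply _ _ _
      _ = Equiv.swap F1' i * Equiv.swap F0 F1' * Equiv.swap F1' i := by rw [Equiv.swap_inv]
  have hbase : d.e * d.σ (Equiv.swap F0 F1') * d.e = d.e := by
    have h := d.e_s_e (show (1:ℕ) < m+2 by omega)
    rwa [sw_eq (by omega) (by omega)] at h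
  rw [hkey, map_mul, map_mul]
  simp only [mul_assoc]
  rw [shz2 ((σ_e_comm d _ hu0).symm), σ_e_comm d _ hu0,
    ← mul_assoc d.e (d.σ (Equiv.swap F0 F1')) _,
    ← mul_assoc (d.e * d.σ (Equiv.swap F0 F1')) d.e _, hbase,
    ← σ_e_comm d _ hu0, σσ d _ _, Equiv.swap_mul_self, map_one, one_mul]

lemma e_swapb_e (i : Fin (m+2)) (hi : i ≠ F0) :
    d.e * (d.σb (Equiv.swap F0 i) * d.e) = d.e := by
  have hu0 : (Equiv.swap F1' i : Perm (Fin (m+2))) F0 = F0 :=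
    Equiv.swap_apply_of_ne_of_ne F0_ne_F1' (Ne.symm hi)
  have hkey : (Equiv.swap F0 i : Perm (Fin (m+2))) =
      Equiv.swap F1' i * Equiv.swap F0 F1' * Equiv.swap F1' i := by
    have h2 : (Equiv.swap F1' i : Perm (Fin (m+2))) F1' = i := Equiv.swap_apply_left _ _
    calc (Equiv.swap F0 i : Perm (Fin (m+2)))
        = Equiv.swap ((Equiv.swap F1' i : Perm (Fin (m+2))) F0)
            ((Equiv.swap F1' i : Perm (Fin (m+2))) F1') := by rw [hu0, h2]
      _ = Equiv.swap F1' i * Equiv.swap F0 F1' * (Equiv.swap F1' i)⁻¹ :=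
          Equiv.swap_apply_apply _ _ _
      _ = Equiv.swap F1' i * Equiv.swap F0 F1' * Equiv.swap F1' i := by rw [Equiv.swap_inv]
  have hbase : d.e * d.σb (Equiv.swap F0 F1') * d.e = d.e := by
    have h := d.e_sb_e (show (1:ℕ) < m+2 by omega)
    rwa [sw_eq (by omega) (by omega)] at h
  rw [hkey, map_mul, map_mul]
  simp only [mul_assoc]
  rw [shz2 ((σb_e_comm d _ hu0).symm), σb_e_comm d _ hu0,
    ← mul_assoc d.e (d.σb (Equiv.swap F0 F1')) _,
    ← mul_assoc (d.e * d.σb (Equiv.swap F0 F1')) d.e _, hbase,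
    ← σb_e_comm d _ hu0, σbσb d _ _, Equiv.swap_mul_self, map_one, one_mul]

end K2
end Prf
namespace Prf
open Equiv
variable {R A : Type} [CommRing R] [Ring A] [Algebra R A]

section K2
variable {m : ℕ} (d : WBC R A (m+2) (m+2))

lemma F1'_ne_FL_or : True := trivial

/-- conjugated braid relations at `sig0` -/
lemma braid_sig0 :
    (d.e * (d.σ sig0 * (d.σb sig0 * (d.e * d.σ sig0)))
      = d.e * (d.σ sig0 * (d.σb sig0 * (d.e * d.σb sig0)))) ∧
    (d.σ sig0 * (d.e * (d.σ sig0 * (d.σb sig0 * d.e)))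
      = d.σb sig0 * (d.e * (d.σ sig0 * (d.σb sig0 * d.e)))) := by
  set g : Perm (Fin (m+2)) := Equiv.swap F1' FL with hgdef
  have hg0 : g F0 = F0 := Equiv.swap_apply_of_ne_of_ne F0_ne_F1' F0_ne_FL
  have hgconj : g * Equiv.swap F0 F1' = sig0 * g := by
    have h1 : (Equiv.swap (g F0) (g F1') : Perm (Fin (m+2))) = g * Equiv.swap F0 F1' * g⁻¹ :=
      Equiv.swap_apply_apply _ _ _
    rw [hg0, Equiv.swap_apply_left] at h1
    have : (sig0 : Perm (Fin (m+2))) = g * Equiv.swap F0 F1' * g⁻¹ := h1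
    rw [this]
    group
  have t1 : ∀ z : A, d.σ g * (d.σb g * (d.σ (Equiv.swap F0 F1') * z))
      = d.σ sig0 * (d.σ g * (d.σb g * z)) := by
    intro z
    rw [shz2 ((d.comm_σσb (Equiv.swap F0 F1') g).symm), σσ d g _, hgconj,
      ← σσ' d sig0 g, mul_assoc]
  have t2 : ∀ z : A, d.σ g * (d.σb g * (d.σb (Equiv.swap F0 F1') * z))
      = d.σb sig0 * (d.σ g * (d.σb g * z)) := by
    intro z
    rw [σbσb d g _, hgconj, ← σbσb' d sig0 g, mul_assoc,
      shz2 (d.comm_σσb g sig0)]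
  have t3 : ∀ z : A, d.σ g * (d.σb g * (d.e * z)) = d.e * (d.σ g * (d.σb g * z)) := by
    intro z
    rw [shz2 (σb_e_comm d g hg0), shz2 (σ_e_comm d g hg0)]
  have t4 : d.σ g * (d.σb g * (d.σ g * d.σb g)) = 1 := by
    rw [shz2 ((d.comm_σσb g g).symm), σσ d g g, Equiv.swap_mul_self, map_one, one_mul,
      σbσb' d g g, Equiv.swap_mul_self, map_one]
  have hs01 : (1:ℕ) < m + 2 := by omega
  constructor
  · have b1 := d.braid1 hs01 hs01
    rw [sw_eq (by omega) (by omega)] at b1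
    have b1' : d.e * d.σ (Equiv.swap F0 F1') * d.σb (Equiv.swap F0 F1') * d.e *
        d.σ (Equiv.swap F0 F1') = d.e * d.σ (Equiv.swap F0 F1') *
        d.σb (Equiv.swap F0 F1') * d.e * d.σb (Equiv.swap F0 F1') := b1
    have h := congrArg (fun x => d.σ g * (d.σb g * (x * (d.σ g * d.σb g)))) b1'
    simp only [mul_assoc] at h
    simp only [t1, t2, t3] at h
    simp only [t4, mul_one] at h
    exact h
  · have b2 := d.braid2 hs01 hs01
    rw [sw_eq (by omega) (by omega)] at b2
    have b2' : d.σ (Equiv.swap F0 F1') * d.e * d.σ (Equiv.swap F0 F1') *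
        d.σb (Equiv.swap F0 F1') * d.e = d.σb (Equiv.swap F0 F1') * d.e *
        d.σ (Equiv.swap F0 F1') * d.σb (Equiv.swap F0 F1') * d.e := b2
    have h := congrArg (fun x => d.σ g * (d.σb g * (x * (d.σ g * d.σb g)))) b2'
    simp only [mul_assoc] at h
    simp only [t1, t2, t3] at h
    simp only [t4, mul_one] at h
    exact h

lemma hXs : d.e * (d.σ sig0 * (d.σb sig0 * (d.e * (d.σ sig0 * d.σb sig0))))
    = d.e * (d.σ sig0 * (d.σb sig0 * d.e)) := by
  have h := congrArg (fun x => x * d.σb sig0) (braid_sig0 d).1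
  simp only [mul_assoc] at h
  rw [σbσb' d sig0 sig0, sig0_sq, map_one, mul_one] at h
  exact h

lemma hB2s : d.σb sig0 * (d.σ sig0 * (d.e * (d.σ sig0 * (d.σb sig0 * d.e))))
    = d.e * (d.σ sig0 * (d.σb sig0 * d.e)) := by
  have h := congrArg (fun x => d.σb sig0 * x) (braid_sig0 d).2
  rw [σbσb d sig0 sig0, sig0_sq, map_one, one_mul] at h
  exact h

lemma e_EE_comm : d.e * EE d = EE d * d.e := by
  have hL : d.e * EE d = d.e * (d.σ sig0 * (d.σb sig0 * d.e)) := by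
    unfold EE
    exact hXs d
  have hR : EE d * d.e = d.e * (d.σ sig0 * (d.σb sig0 * d.e)) := by
    unfold EE
    simp only [mul_assoc]
    rw [shz2 (d.comm_σσb sig0 sig0)]
    exact hB2s d
  exact hL.trans hR.symm

lemma collapse : d.σ sig0 * (d.σb sig0 * EE d) = d.e * (d.σ sig0 * d.σb sig0) := by
  unfold EE
  rw [shz2 ((d.comm_σσb sig0 sig0).symm), σσ d sig0 sig0, sig0_sq, map_one, one_mul,
    σbσb d sig0 sig0, sig0_sq, map_one, one_mul]

lemma F10base : EE d * (d.σ sig0 * (d.σb sig0 * EE d)) = d.e * EE d := by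
  rw [collapse d, e_EE_comm d]
  unfold EE
  simp only [mul_assoc]
  rw [hXs d]

end K2
end Prf
namespace Prf
open Equiv
variable {R A : Type} [CommRing R] [Ring A] [Algebra R A]

section K2
variable {m : ℕ} (d : WBC R A (m+2) (m+2))

lemma swap_conj (u : Perm (Fin (m+2))) (x y : Fin (m+2)) :
    u * Equiv.swap x y * u = Equiv.swap (u x) (u y) * (u * u) := by
  have h : (Equiv.swap (u x) (u y) : Perm (Fin (m+2))) = u * Equiv.swap x y * u⁻¹ :=
    Equiv.swap_apply_apply u x y
  rw [h]; group

lemma F9σ (i : Fin (m+2)) (hi : i ≠ FL) :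
    EE d * (d.σ (Equiv.swap i FL) * EE d) = EE d := by
  have hperm : sig0 * Equiv.swap i FL * sig0 = Equiv.swap F0 ((sig0 : Perm (Fin (m+2))) i) := by
    have h := swap_conj (sig0 : Perm (Fin (m+2))) i FL
    rw [sig0_sq, mul_one, sig0_FL] at h
    rw [h]
    exact Equiv.swap_comm _ _
  have hz := congrArg (fun x => x * (d.σ sig0 * d.σb sig0))
    (e_swap_e d ((sig0 : Perm (Fin (m+2))) i) (sig0_ne_F0 hi))
  simp only [mul_assoc] at hz
  conv_lhs => unfold EE
  conv_rhs => unfold EE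
  simp only [mul_assoc]
  rw [shz2 ((d.comm_σσb (Equiv.swap i FL) sig0).symm), σσ d sig0 (Equiv.swap i FL),
    shz2 ((d.comm_σσb sig0 sig0).symm), σσ d (sig0 * Equiv.swap i FL) sig0,
    σbσb d sig0 sig0, sig0_sq, map_one, one_mul, ← mul_assoc, mul_assoc, hperm, hz]

lemma F9σb (j : Fin (m+2)) (hj : j ≠ FL) :
    EE d * (d.σb (Equiv.swap j FL) * EE d) = EE d := by
  have hperm : sig0 * (Equiv.swap j FL * sig0) = Equiv.swap F0 ((sig0 : Perm (Fin (m+2))) j) := by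
    have h := swap_conj (sig0 : Perm (Fin (m+2))) j FL
    rw [sig0_sq, mul_one, sig0_FL] at h
    rw [← mul_assoc, h]
    exact Equiv.swap_comm _ _
  have hz := congrArg (fun x => x * (d.σ sig0 * d.σb sig0))
    (e_swapb_e d ((sig0 : Perm (Fin (m+2))) j) (sig0_ne_F0 hj))
  simp only [mul_assoc] at hz
  conv_lhs => unfold EE
  conv_rhs => unfold EE
  simp only [mul_assoc]
  rw [σbσb d sig0 (Equiv.swap j FL), shz2 ((d.comm_σσb sig0 (sig0 * Equiv.swap j FL)).symm),
    σσ d sig0 sig0, sig0_sq, map_one, one_mul, σbσb d (sig0 * Equiv.swap j FL) sig0,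
    mul_assoc, hperm, hz]

/-- the key mixed sandwich identity -/
lemma F10 (i j : Fin (m+2)) (hi : i ≠ FL) (hj : j ≠ FL) :
    EE d * (d.σ (Equiv.swap i FL) * (d.σb (Equiv.swap j FL) * EE d)) = E0 d i j * EE d := by
  have hvi : (Equiv.swap F0 i : Perm (Fin (m+2))) FL = FL :=
    Equiv.swap_apply_of_ne_of_ne (Ne.symm F0_ne_FL) (Ne.symm hi)
  have hvj : (Equiv.swap F0 j : Perm (Fin (m+2))) FL = FL :=
    Equiv.swap_apply_of_ne_of_ne (Ne.symm F0_ne_FL) (Ne.symm hj)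
  have hiconj : Equiv.swap F0 i * sig0 = Equiv.swap i FL * Equiv.swap F0 i := by
    have h := swap_conj (Equiv.swap F0 i : Perm (Fin (m+2))) F0 FL
    rw [Equiv.swap_apply_left, hvi] at h
    have h2 : (Equiv.swap F0 i : Perm (Fin (m+2))) * sig0 * Equiv.swap F0 i
        = Equiv.swap i FL * (Equiv.swap F0 i * Equiv.swap F0 i) := h
    rw [Equiv.swap_mul_self, mul_one] at h2
    calc (Equiv.swap F0 i : Perm (Fin (m+2))) * sig0
        = Equiv.swap F0 i * sig0 * (Equiv.swap F0 i * Equiv.swap F0 i) := by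
          rw [Equiv.swap_mul_self, mul_one]
      _ = Equiv.swap F0 i * sig0 * Equiv.swap F0 i * Equiv.swap F0 i := by group
      _ = Equiv.swap i FL * Equiv.swap F0 i := by rw [h2]
  have hjconj : Equiv.swap F0 j * sig0 = Equiv.swap j FL * Equiv.swap F0 j := by
    have h := swap_conj (Equiv.swap F0 j : Perm (Fin (m+2))) F0 FL
    rw [Equiv.swap_apply_left, hvj] at h
    have h2 : (Equiv.swap F0 j : Perm (Fin (m+2))) * sig0 * Equiv.swap F0 j
        = Equiv.swap j FL * (Equiv.swap F0 j * Equiv.swap F0 j) := h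
    rw [Equiv.swap_mul_self, mul_one] at h2
    calc (Equiv.swap F0 j : Perm (Fin (m+2))) * sig0
        = Equiv.swap F0 j * sig0 * (Equiv.swap F0 j * Equiv.swap F0 j) := by
          rw [Equiv.swap_mul_self, mul_one]
      _ = Equiv.swap F0 j * sig0 * Equiv.swap F0 j * Equiv.swap F0 j := by group
      _ = Equiv.swap j FL * Equiv.swap F0 j := by rw [h2]
  have tE : ∀ z : A, d.σ (Equiv.swap F0 i) * (d.σb (Equiv.swap F0 j) * (EE d * z))
      = EE d * (d.σ (Equiv.swap F0 i) * (d.σb (Equiv.swap F0 j) * z)) := by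
    intro z
    rw [shz2 (σb_EE_comm d _ hvj), shz2 (σ_EE_comm d _ hvi)]
  have tS : ∀ z : A, d.σ (Equiv.swap F0 i) * (d.σb (Equiv.swap F0 j) * (d.σ sig0 * z))
      = d.σ (Equiv.swap i FL) * (d.σ (Equiv.swap F0 i) * (d.σb (Equiv.swap F0 j) * z)) := by
    intro z
    rw [shz2 ((d.comm_σσb sig0 (Equiv.swap F0 j)).symm), σσ d (Equiv.swap F0 i) sig0, hiconj,
      ← σσ' d (Equiv.swap i FL) (Equiv.swap F0 i), mul_assoc]
  have tSb : ∀ z : A, d.σ (Equiv.swap F0 i) * (d.σb (Equiv.swap F0 j) * (d.σb sig0 * z))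
      = d.σb (Equiv.swap j FL) * (d.σ (Equiv.swap F0 i) * (d.σb (Equiv.swap F0 j) * z)) := by
    intro z
    rw [σbσb d (Equiv.swap F0 j) sig0, hjconj, ← σbσb' d (Equiv.swap j FL) (Equiv.swap F0 j),
      mul_assoc, shz2 (d.comm_σσb (Equiv.swap F0 i) (Equiv.swap j FL))]
  have tT : d.σ (Equiv.swap F0 i) * (d.σb (Equiv.swap F0 j) *
      (d.σ (Equiv.swap F0 i) * d.σb (Equiv.swap F0 j))) = 1 := by
    rw [shz2 ((d.comm_σσb (Equiv.swap F0 i) (Equiv.swap F0 j)).symm),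
      σσ d _ _, Equiv.swap_mul_self, map_one, one_mul, σbσb' d _ _,
      Equiv.swap_mul_self, map_one]
  have te : ∀ z : A, d.σ (Equiv.swap F0 i) * (d.σb (Equiv.swap F0 j) * (d.e * z))
      = E0 d i j * (d.σ (Equiv.swap F0 i) * (d.σb (Equiv.swap F0 j) * z)) := by
    intro z
    have h := move_e d (Equiv.swap F0 i) (Equiv.swap F0 j) z
    rwa [Equiv.swap_apply_left, Equiv.swap_apply_left] at h
  have h := congrArg (fun x => d.σ (Equiv.swap F0 i) * (d.σb (Equiv.swap F0 j) *
    (x * (d.σ (Equiv.swap F0 i) * d.σb (Equiv.swap F0 j))))) (F10base d)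
  simp only [mul_assoc] at h
  simp only [tE, tS, tSb, te] at h
  simp only [tT, mul_one] at h
  exact h

end K2
end Prf
namespace Prf
open Equiv
variable {R A : Type} [CommRing R] [Ring A] [Algebra R A]

section K2
variable {m : ℕ} (d : WBC R A (m+2) (m+2))

lemma e_mem : d.e ∈ LL d := Algebra.subset_adjoin (Or.inl ⟨by omega, rfl⟩)

lemma s_mem (j : ℕ) (h1 : 1 ≤ j) (h2 : j + 1 ≤ m + 1) :
    d.σ (sw (m+2) (j-1) j) ∈ LL d :=
  Algebra.subset_adjoin (Or.inr (Or.inl ⟨j, h1, h2, rfl⟩))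

lemma sb_mem (j : ℕ) (h1 : 1 ≤ j) (h2 : j + 1 ≤ m + 1) :
    d.σb (sw (m+2) (j-1) j) ∈ LL d :=
  Algebra.subset_adjoin (Or.inr (Or.inr (Or.inl ⟨j, h1, h2, rfl⟩)))

lemma σ_mem (w : Perm (Fin (m+2))) (hw : w FL = FL) : d.σ w ∈ LL d := by
  refine closure_ind (P := fun w => d.σ w ∈ LL d)
    (fun s hs => ?_) ?_ ?_ ?_ w (stab_last (by omega) w hw)
  · obtain ⟨i, _, _, rfl⟩ := hs; exact sw_mul_self _ _ _
  · show d.σ 1 ∈ LL d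
    rw [map_one]; exact (LL d).one_mem
  · intro x y hx hy
    show d.σ (x * y) ∈ LL d
    rw [map_mul]; exact (LL d).mul_mem hx hy
  · rintro s ⟨i, _, h2, rfl⟩
    have := s_mem d (i+1) (by omega) (by omega)
    simpa using this

lemma σb_mem (w : Perm (Fin (m+2))) (hw : w FL = FL) : d.σb w ∈ LL d := by
  refine closure_ind (P := fun w => d.σb w ∈ LL d)
    (fun s hs => ?_) ?_ ?_ ?_ w (stab_last (by omega) w hw)
  · obtain ⟨i, _, _, rfl⟩ := hs; exact sw_mul_self _ _ _
  · show d.σb 1 ∈ LL d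
    rw [map_one]; exact (LL d).one_mem
  · intro x y hx hy
    show d.σb (x * y) ∈ LL d
    rw [map_mul]; exact (LL d).mul_mem hx hy
  · rintro s ⟨i, _, h2, rfl⟩
    have := sb_mem d (i+1) (by omega) (by omega)
    simpa using this

lemma c0_mem : d.c F0 ∈ LL d := by
  have h : d.cn 1 = d.c F0 := by
    unfold WBC.cn
    rw [dif_pos (show 1 - 1 < m + 2 by omega)]
    rfl
  exact Algebra.subset_adjoin (Or.inr (Or.inr (Or.inr (Or.inl ⟨by omega, h.symm⟩))))

lemma cb0_mem : d.cb F0 ∈ LL d := by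
  have h : d.cbn 1 = d.cb F0 := by
    unfold WBC.cbn
    rw [dif_pos (show 1 - 1 < m + 2 by omega)]
    rfl
  exact Algebra.subset_adjoin (Or.inr (Or.inr (Or.inr (Or.inr ⟨by omega, h.symm⟩))))

lemma swapF0_fix {i : Fin (m+2)} (hi : i ≠ FL) :
    (Equiv.swap F0 i : Perm (Fin (m+2))) FL = FL :=
  Equiv.swap_apply_of_ne_of_ne (Ne.symm F0_ne_FL) (Ne.symm hi)

lemma c_mem (i : Fin (m+2)) (hi : i ≠ FL) : d.c i ∈ LL d := by
  have key : d.σ (Equiv.swap F0 i) * d.c F0 * d.σ (Equiv.swap F0 i) = d.c i := by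
    rw [sc d _ F0, Equiv.swap_apply_left, mul_assoc, σσ' d _ _, Equiv.swap_mul_self,
      map_one, mul_one]
  rw [← key]
  exact (LL d).mul_mem ((LL d).mul_mem (σ_mem d _ (swapF0_fix hi)) (c0_mem d))
    (σ_mem d _ (swapF0_fix hi))

lemma cb_mem (i : Fin (m+2)) (hi : i ≠ FL) : d.cb i ∈ LL d := by
  have key : d.σb (Equiv.swap F0 i) * d.cb F0 * d.σb (Equiv.swap F0 i) = d.cb i := by
    rw [sbcb d _ F0, Equiv.swap_apply_left, mul_assoc, σbσb' d _ _, Equiv.swap_mul_self,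
      map_one, mul_one]
  rw [← key]
  exact (LL d).mul_mem ((LL d).mul_mem (σb_mem d _ (swapF0_fix hi)) (cb0_mem d))
    (σb_mem d _ (swapF0_fix hi))

lemma E0_mem (i j : Fin (m+2)) (hi : i ≠ FL) (hj : j ≠ FL) : E0 d i j ∈ LL d := by
  unfold E0
  exact (LL d).mul_mem (σ_mem d _ (swapF0_fix hi)) ((LL d).mul_mem (σb_mem d _ (swapF0_fix hj))
    ((LL d).mul_mem (e_mem d) ((LL d).mul_mem (σ_mem d _ (swapF0_fix hi))
      (σb_mem d _ (swapF0_fix hj)))))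

lemma FL_ne_mk {a : ℕ} (ha : a ≤ m) (h : a < m + 2) : (FL : Fin (m+2)) ≠ ⟨a, h⟩ := by
  simp only [FL, ne_eq, Fin.mk.injEq]; omega

/-- every element of the lower subalgebra commutes with `EE` -/
lemma COMM (x : A) (hx : x ∈ LL d) : x * EE d = EE d * x := by
  induction hx using Algebra.adjoin_induction with
  | mem x hx =>
    rcases hx with ⟨_, rfl⟩ | ⟨j, h1, h2, rfl⟩ | ⟨j, h1, h2, rfl⟩ | ⟨_, rfl⟩ | ⟨_, rfl⟩
    · exact e_EE_comm d
    · unfold WBC.s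
      rw [sw_eq (by omega) (by omega)]
      exact σ_EE_comm d _ (Equiv.swap_apply_of_ne_of_ne
        (FL_ne_mk (by omega) (by omega)) (FL_ne_mk (by omega) (by omega)))
    · unfold WBC.sb
      rw [sw_eq (by omega) (by omega)]
      exact σb_EE_comm d _ (Equiv.swap_apply_of_ne_of_ne
        (FL_ne_mk (by omega) (by omega)) (FL_ne_mk (by omega) (by omega)))
    · have h : d.cn 1 = d.c F0 := by
        unfold WBC.cn
        rw [dif_pos (show 1 - 1 < m + 2 by omega)]
        rfl
      rw [h]
      exact c_EE_comm d F0 F0_ne_FL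
    · have h : d.cbn 1 = d.cb F0 := by
        unfold WBC.cbn
        rw [dif_pos (show 1 - 1 < m + 2 by omega)]
        rfl
      rw [h]
      exact cb_EE_comm d F0 F0_ne_FL
  | algebraMap r => exact (Algebra.commutes r (EE d))
  | add x y _ _ hx hy => rw [add_mul, mul_add, hx, hy]
  | mul x y _ _ hx hy => rw [mul_assoc, hy, ← mul_assoc, hx, mul_assoc]

end K2
end Prf
namespace Prf
open Equiv
variable {R A : Type} [CommRing R] [Ring A] [Algebra R A]

lemma anti_pow_one (x y : A) (h : x * y = -(y * x)) (a : ℕ) :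
    x ^ a * y = (-1:A)^a * (y * x^a) := by
  induction a with
  | zero => simp
  | succ n ih =>
    rw [pow_succ, mul_assoc, h, mul_neg, ← mul_assoc, ih, pow_succ]
    simp only [pow_succ, mul_assoc, mul_neg, neg_mul, mul_neg_one, mul_one, one_mul, neg_neg]

lemma neg_one_pow_comm (k : ℕ) (x : A) : (-1:A)^k * x = x * (-1:A)^k :=
  ((Commute.neg_one_left x).pow_left k).eq

/-- scalar pull: `x * ((-1)^k * z) = (-1)^k * (x * z)` -/
lemma spull (k : ℕ) (x z : A) : x * ((-1:A)^k * z) = (-1:A)^k * (x * z) :=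
  shz2 ((neg_one_pow_comm k x).symm) z

/-- `x^a * (y * z) = (-1)^a * (y * (x^a * z))` for anticommuting `x`, `y` -/
lemma anti1z {x y : A} (h : x * y = -(y * x)) (a : ℕ) (z : A) :
    x ^ a * (y * z) = (-1:A)^a * (y * (x^a * z)) := by
  have h' : x ^ a * y = ((-1:A)^a * y) * x^a := by
    rw [anti_pow_one x y h a, mul_assoc]
  rw [shz2 h', mul_assoc]

section K2
variable {m : ℕ} (d : WBC R A (m+2) (m+2))

lemma F9σz (i : Fin (m+2)) (hi : i ≠ FL) (z : A) :
    EE d * (d.σ (Equiv.swap i FL) * (EE d * z)) = EE d * z := by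
  have h := congrArg (fun x => x * z) (F9σ d i hi)
  simp only [mul_assoc] at h
  exact h

lemma F9σbz (j : Fin (m+2)) (hj : j ≠ FL) (z : A) :
    EE d * (d.σb (Equiv.swap j FL) * (EE d * z)) = EE d * z := by
  have h := congrArg (fun x => x * z) (F9σb d j hj)
  simp only [mul_assoc] at h
  exact h

lemma F10z (i j : Fin (m+2)) (hi : i ≠ FL) (hj : j ≠ FL) (z : A) :
    EE d * (d.σ (Equiv.swap i FL) * (d.σb (Equiv.swap j FL) * (EE d * z)))
      = E0 d i j * (EE d * z) := by
  have h := congrArg (fun x => x * z) (F10 d i j hi hj)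
  simp only [mul_assoc] at h
  exact h

lemma EGEz (a b : ℕ) (z : A) :
    EE d * (d.c FL ^ a * (d.cb FL ^ b * (EE d * z))) = 0 := by
  have h := congrArg (fun x => x * z) (EGE d a b)
  simp only [mul_assoc, zero_mul] at h
  exact h

/-- c-powers pass through `EE` -/
lemma cpowz (i : Fin (m+2)) (hi : i ≠ FL) (n : ℕ) (z : A) :
    d.c i ^ n * (EE d * z) = EE d * (d.c i ^ n * z) := by
  have hc : Commute (d.c i) (EE d) := c_EE_comm d i hi
  exact shz2 (hc.pow_left n).eq z

lemma cbpowz (j : Fin (m+2)) (hj : j ≠ FL) (n : ℕ) (z : A) :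
    d.cb j ^ n * (EE d * z) = EE d * (d.cb j ^ n * z) := by
  have hc : Commute (d.cb j) (EE d) := cb_EE_comm d j hj
  exact shz2 (hc.pow_left n).eq z

lemma cbpow' (j : Fin (m+2)) (hj : j ≠ FL) (n : ℕ) :
    d.cb j ^ n * EE d = EE d * d.cb j ^ n := by
  have hc : Commute (d.cb j) (EE d) := cb_EE_comm d j hj
  exact (hc.pow_left n).eq

lemma cpow' (i : Fin (m+2)) (hi : i ≠ FL) (n : ℕ) :
    d.c i ^ n * EE d = EE d * d.c i ^ n := by
  have hc : Commute (d.c i) (EE d) := c_EE_comm d i hi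
  exact (hc.pow_left n).eq

/-- the core sandwich `E γ σ(swap i FL) σb(swap j FL) E` -/
lemma CORE (a b : ℕ) (i j : Fin (m+2)) :
    ∃ mm ∈ LL d, EE d * (d.c FL ^ a * (d.cb FL ^ b *
      (d.σ (Equiv.swap i FL) * (d.σb (Equiv.swap j FL) * EE d)))) = EE d * mm := by
  by_cases hi : i = FL <;> by_cases hj : j = FL
  · -- both trivial: the sandwich is zero
    subst hi; subst hj
    refine ⟨0, (LL d).zero_mem, ?_⟩
    rw [Equiv.swap_self]
    have h1 : d.σ (Equiv.refl (Fin (m+2))) = 1 := map_one d.σ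
    have h2 : d.σb (Equiv.refl (Fin (m+2))) = 1 := map_one d.σb
    rw [h1, h2, one_mul, one_mul, mul_zero]
    exact EGE d a b
  · -- i = FL, j ≠ FL
    subst hi
    have hsemicb : d.σb (Equiv.swap j FL) * d.cb j = d.cb FL * d.σb (Equiv.swap j FL) := by
      rw [sbcb d _ j, Equiv.swap_apply_left]
    rw [Equiv.swap_self]
    have h1 : d.σ (Equiv.refl (Fin (m+2))) = 1 := map_one d.σ
    rw [h1, one_mul]
    -- E c^a cb^b σb(τj) E
    rw [shz2 ((SemiconjBy.pow_right hsemicb b).eq.symm),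
      shz2 ((SemiconjBy.pow_right ((d.comm_σbc (Equiv.swap j FL) FL)) a).eq.symm),
      cbpow' d j hj b, cL_pow]
    -- now: E ((-1)^(a/2) c^(a%2)) σb(τj) (E cb j^b)
    rcases Nat.mod_two_eq_zero_or_one a with h | h <;> rw [h]
    · refine ⟨(-1:A)^(a/2) * d.cb j ^ b,
        (LL d).mul_mem (pow_mem ((LL d).neg_mem (LL d).one_mem) _)
          (pow_mem (cb_mem d j hj) b), ?_⟩
      rw [pow_zero, mul_one, spull, spull, F9σbz d j hj, spull]
    · refine ⟨(-1:A)^(a/2) * (d.cb j ^ (b+1)),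
        (LL d).mul_mem (pow_mem ((LL d).neg_mem (LL d).one_mem) _)
          (pow_mem (cb_mem d j hj) (b+1)), ?_⟩
      rw [pow_one, mul_assoc ((-1:A)^(a/2)) (d.c FL) _, spull, spull, shz2 (cL_EE d),
        shz2 ((sbcb d (Equiv.swap j FL) FL).trans (by rw [Equiv.swap_apply_right])),
        shz2 ((cb_EE_comm d j hj).symm), F9σbz d j hj,
        shz2 (cb_EE_comm d j hj), ← pow_succ', spull]
  · -- i ≠ FL, j = FL
    subst hj
    have hsemic : d.σ (Equiv.swap i FL) * d.c i = d.c FL * d.σ (Equiv.swap i FL) := by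
      rw [sc d _ i, Equiv.swap_apply_left]
    rw [Equiv.swap_self]
    have h2 : d.σb (Equiv.refl (Fin (m+2))) = 1 := map_one d.σb
    rw [h2, one_mul]
    -- E c^a cb^b σ(τi) E
    rw [shz2 ((SemiconjBy.pow_right (d.comm_σcb (Equiv.swap i FL) FL) b).eq.symm),
      shz2 ((SemiconjBy.pow_right hsemic a).eq.symm), cbL_pow]
    rcases Nat.mod_two_eq_zero_or_one b with h | h <;> rw [h]
    · refine ⟨d.c i ^ a, pow_mem (c_mem d i hi) a, ?_⟩
      rw [pow_zero, one_mul, cpow' d i hi a, F9σz d i hi]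
    · refine ⟨(-1:A)^a * d.c i ^ (a+1),
        (LL d).mul_mem (pow_mem ((LL d).neg_mem (LL d).one_mem) _)
          (pow_mem (c_mem d i hi) (a+1)), ?_⟩
      rw [pow_one, ← cL_EE d, anti1z (d.c_anti i FL hi) a, cpow' d i hi a, spull,
        shz2 ((sc d (Equiv.swap i FL) FL).trans (by rw [Equiv.swap_apply_right])), spull,
        shz2 ((c_EE_comm d i hi).symm), F9σz d i hi,
        shz2 (c_EE_comm d i hi), ← pow_succ', spull]
  · -- i ≠ FL, j ≠ FL
    have hsemic : d.σ (Equiv.swap i FL) * d.c i = d.c FL * d.σ (Equiv.swap i FL) := by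
      rw [sc d _ i, Equiv.swap_apply_left]
    have hsemicb : d.σb (Equiv.swap j FL) * d.cb j = d.cb FL * d.σb (Equiv.swap j FL) := by
      rw [sbcb d _ j, Equiv.swap_apply_left]
    refine ⟨E0 d i j * (d.c i ^ a * d.cb j ^ b),
      (LL d).mul_mem (E0_mem d i j hi hj)
        ((LL d).mul_mem (pow_mem (c_mem d i hi) a) (pow_mem (cb_mem d j hj) b)), ?_⟩
    rw [shz2 ((SemiconjBy.pow_right (d.comm_σcb (Equiv.swap i FL) FL) b).eq.symm),
      shz2 ((SemiconjBy.pow_right hsemic a).eq.symm),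
      shz2 ((SemiconjBy.pow_right hsemicb b).eq.symm),
      shz2 ((SemiconjBy.pow_right (d.comm_σbc (Equiv.swap j FL) i) a).eq.symm),
      cbpow' d j hj b, cpowz d i hi a, F10z d i j hi hj,
      shz2 (COMM d _ (E0_mem d i j hi hj))]

end K2
end Prf
namespace Prf
open Equiv
variable {R A : Type} [CommRing R] [Ring A] [Algebra R A]

section K2
variable {m : ℕ} (d : WBC R A (m+2) (m+2))

lemma sig0_def : (sig0 : Perm (Fin (m+2))) = Equiv.swap F0 FL := rfl

lemma cL_E0_comm (i j : Fin (m+2)) (hi : i ≠ FL) (hj : j ≠ FL) :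
    d.c FL * E0 d i j = E0 d i j * d.c FL := by
  have h1 : d.c FL * d.σ (Equiv.swap F0 i) = d.σ (Equiv.swap F0 i) * d.c FL := by
    rw [cs d _ FL, Equiv.swap_inv, swapF0_fix hi]
  have h2 : ((FL : Fin (m+2)) : ℕ) ≠ 0 := by simp [FL]
  unfold E0
  rw [shz2 h1, shz2 ((d.comm_σbc (Equiv.swap F0 j) FL).symm), shz2 (d.c_e_comm FL h2),
    shz2 h1, (d.comm_σbc (Equiv.swap F0 j) FL).symm]
  simp only [mul_assoc]

lemma cbL_E0_comm (i j : Fin (m+2)) (hi : i ≠ FL) (hj : j ≠ FL) :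
    d.cb FL * E0 d i j = E0 d i j * d.cb FL := by
  have h1 : d.cb FL * d.σb (Equiv.swap F0 j) = d.σb (Equiv.swap F0 j) * d.cb FL := by
    rw [cbsb d _ FL, Equiv.swap_inv, swapF0_fix hj]
  have h2 : ((FL : Fin (m+2)) : ℕ) ≠ 0 := by simp [FL]
  unfold E0
  rw [shz2 ((d.comm_σcb (Equiv.swap F0 i) FL).symm), shz2 h1, shz2 (d.cb_e_comm FL h2),
    shz2 ((d.comm_σcb (Equiv.swap F0 i) FL).symm), h1]
  simp only [mul_assoc]

lemma E0_FL_right (j : Fin (m+2)) :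
    E0 d FL j = d.σb (Equiv.swap F0 j) * (d.σb (Equiv.swap F0 FL) *
      (EE d * (d.σb (Equiv.swap F0 FL) * d.σb (Equiv.swap F0 j)))) := by
  unfold EE
  rw [← sig0_def]
  unfold E0
  rw [← sig0_def]
  -- RHS: σb vj (σb s0 (σ s0 (σb s0 (e (σ s0 (σb s0 (σb s0 (σb vj)))))))
  simp only [mul_assoc]
  rw [shz2 ((d.comm_σσb sig0 sig0).symm), σbσb d sig0 sig0, sig0_sq, map_one, one_mul,
    shz2 ((d.comm_σσb sig0 (Equiv.swap F0 j)).symm),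
    σbσb d sig0 sig0, sig0_sq, map_one, one_mul]

lemma E0_FL_left (i : Fin (m+2)) :
    E0 d i FL = d.σ (Equiv.swap F0 i) * (d.σ (Equiv.swap F0 FL) *
      (EE d * (d.σ (Equiv.swap F0 FL) * d.σ (Equiv.swap F0 i)))) := by
  unfold EE
  rw [← sig0_def]
  unfold E0
  rw [← sig0_def]
  simp only [mul_assoc]
  rw [σσ d sig0 sig0, sig0_sq, map_one, one_mul, shz2 ((d.comm_σσb sig0 sig0).symm),
    σσ d sig0 sig0, sig0_sq, map_one, one_mul, d.comm_σσb (Equiv.swap F0 i) sig0]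

/-- σ-side auxiliary sandwich -/
lemma CORE6 (aa bb : ℕ) (V : A) :
    EE d * (d.σ (Equiv.swap F0 FL) * (d.c F0 ^ aa * (d.cb FL ^ bb * (EE d * V))))
      = (-1:A)^(aa*(bb%2)) * (d.c F0^(bb%2) * (EE d * (d.c F0^aa * V))) := by
  rw [cbL_pow d bb]
  rcases Nat.mod_two_eq_zero_or_one bb with h | h <;> rw [h]
  · rw [pow_zero, one_mul, cpowz d F0 F0_ne_FL aa, F9σz d F0 F0_ne_FL,
      Nat.mul_zero, pow_zero, pow_zero, one_mul, one_mul]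
  · rw [pow_one, shz2 (cL_EE d).symm, anti1z (d.c_anti F0 FL F0_ne_FL) aa,
      cpowz d F0 F0_ne_FL aa, spull,
      shz2 ((sc d (Equiv.swap F0 FL) FL).trans (by rw [Equiv.swap_apply_right])),
      spull, shz2 ((c_EE_comm d F0 F0_ne_FL).symm), F9σz d F0 F0_ne_FL,
      Nat.mul_one, pow_one]

/-- σb-side auxiliary sandwich -/
lemma CORE7 (aa : ℕ) (V : A) :
    EE d * (d.σb (Equiv.swap F0 FL) * (d.c FL ^ aa * (EE d * V)))
      = (-1:A)^(aa/2) * (d.cb F0^(aa%2) * (EE d * V)) := by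
  rw [cL_pow d aa]
  rcases Nat.mod_two_eq_zero_or_one aa with h | h <;> rw [h]
  · rw [pow_zero, mul_one, spull, spull, F9σbz d F0 F0_ne_FL, pow_zero, one_mul]
  · rw [pow_one, mul_assoc ((-1:A)^(aa/2)) (d.c FL) _, spull, spull, shz2 (cL_EE d),
      shz2 ((sbcb d (Equiv.swap F0 FL) FL).trans (by rw [Equiv.swap_apply_right])),
      shz2 ((cb_EE_comm d F0 F0_ne_FL).symm), F9σbz d F0 F0_ne_FL, pow_one]

/-- base case of the scan -/
lemma BASE (a b : ℕ) (w wb : Perm (Fin (m+2))) :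
    ∃ mm ∈ LL d, EE d * (d.c FL ^ a * (d.cb FL ^ b * (d.σ w * (d.σb wb * EE d)))) = EE d * mm := by
  obtain ⟨i, hidef⟩ : ∃ i, i = w⁻¹ FL := ⟨_, rfl⟩
  obtain ⟨j, hjdef⟩ : ∃ j, j = wb⁻¹ FL := ⟨_, rfl⟩
  obtain ⟨w1, hw1def⟩ : ∃ w1, w1 = w * Equiv.swap i FL := ⟨_, rfl⟩
  obtain ⟨wb1, hwb1def⟩ : ∃ wb1, wb1 = wb * Equiv.swap j FL := ⟨_, rfl⟩
  have hw1 : w1 FL = FL := by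
    rw [hw1def, Equiv.Perm.mul_apply, Equiv.swap_apply_right, hidef,
      ← Equiv.Perm.mul_apply, mul_inv_cancel, Equiv.Perm.one_apply]
  have hwb1 : wb1 FL = FL := by
    rw [hwb1def, Equiv.Perm.mul_apply, Equiv.swap_apply_right, hjdef,
      ← Equiv.Perm.mul_apply, mul_inv_cancel, Equiv.Perm.one_apply]
  have hsplit : w = w1 * Equiv.swap i FL := by
    rw [hw1def, mul_assoc, Equiv.swap_mul_self, mul_one]
  have hsplitb : wb = wb1 * Equiv.swap j FL := by
    rw [hwb1def, mul_assoc, Equiv.swap_mul_self, mul_one]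
  have hsemi : SemiconjBy (d.σ w1) (d.c FL) (d.c FL) := by
    show d.σ w1 * d.c FL = d.c FL * d.σ w1
    rw [sc d w1 FL, hw1]
  have hsemib : SemiconjBy (d.σb wb1) (d.cb FL) (d.cb FL) := by
    show d.σb wb1 * d.cb FL = d.cb FL * d.σb wb1
    rw [sbcb d wb1 FL, hwb1]
  obtain ⟨mm, hmm, hcore⟩ := CORE d a b i j
  refine ⟨d.σ w1 * (d.σb wb1 * mm),
    (LL d).mul_mem (σ_mem d w1 hw1) ((LL d).mul_mem (σb_mem d wb1 hwb1) hmm), ?_⟩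
  conv_lhs => rw [hsplit, hsplitb, map_mul, map_mul]
  simp only [mul_assoc]
  rw [shz2 (d.comm_σσb (Equiv.swap i FL) wb1),
    shz2 ((SemiconjBy.pow_right (d.comm_σcb w1 FL) b).eq.symm),
    shz2 ((hsemi.pow_right a).eq.symm),
    shz2 ((σ_EE_comm d w1 hw1).symm),
    shz2 ((hsemib.pow_right b).eq.symm),
    shz2 ((SemiconjBy.pow_right (d.comm_σbc wb1 FL) a).eq.symm),
    shz2 ((σb_EE_comm d wb1 hwb1).symm),
    hcore, shz2 (σb_EE_comm d wb1 hwb1), shz2 (σ_EE_comm d w1 hw1)]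

end K2
end Prf
namespace Prf
open Equiv
variable {R A : Type} [CommRing R] [Ring A] [Algebra R A]

section K2
variable {m : ℕ} (d : WBC R A (m+2) (m+2))

lemma neg_pow_mem (k : ℕ) : ((-1:A)^k) ∈ LL d := pow_mem ((LL d).neg_mem (LL d).one_mem) k

lemma scan (l : List A) (hl : ∀ x ∈ l, x ∈ fullGens d) :
    ∀ (a b : ℕ) (w wb : Perm (Fin (m+2))),
    ∃ mm ∈ LL d,
      EE d * (d.c FL ^ a * (d.cb FL ^ b * (d.σ w * (d.σb wb * (l.prod * EE d))))) = EE d * mm := by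
  induction l with
  | nil =>
    intro a b w wb
    obtain ⟨mm, hmm, h⟩ := BASE d a b w wb
    refine ⟨mm, hmm, ?_⟩
    simpa only [List.prod_nil, one_mul] using h
  | cons g l ih =>
    intro a b w wb
    have hl' : ∀ x ∈ l, x ∈ fullGens d := fun x hx => hl x (List.mem_cons_of_mem g hx)
    have hg := hl g List.mem_cons_self
    rw [List.prod_cons, mul_assoc]
    rcases hg with (((⟨v, rfl⟩ | ⟨v, rfl⟩) | ⟨ii, rfl⟩) | ⟨jj, rfl⟩) | hg
    · -- generator σ v
      obtain ⟨mm, hmm, h⟩ := ih hl' a b (w * v) wb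
      refine ⟨mm, hmm, ?_⟩
      rw [shz2 ((d.comm_σσb v wb).symm), σσ d w v]
      exact h
    · -- generator σb v
      obtain ⟨mm, hmm, h⟩ := ih hl' a b w (wb * v)
      refine ⟨mm, hmm, ?_⟩
      rw [σbσb d wb v]
      exact h
    · -- generator c ii
      rw [shz2 (d.comm_σbc wb ii), shz2 (sc d w ii)]
      by_cases hwi : w ii = FL
      · rw [hwi]
        obtain ⟨mm, hmm, h⟩ := ih hl' (a+1) b w wb
        refine ⟨(-1:A)^b * mm, (LL d).mul_mem (neg_pow_mem d b) hmm, ?_⟩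
        rw [anti1z (cbc d FL FL) b, spull, ← mul_assoc (d.c FL ^ a) (d.c FL), ← pow_succ,
          spull, h, spull b (EE d) mm]
      · obtain ⟨mm, hmm, h⟩ := ih hl' a b w wb
        refine ⟨(-1:A)^b * ((-1:A)^a * (d.c (w ii) * mm)),
          (LL d).mul_mem (neg_pow_mem d b) ((LL d).mul_mem (neg_pow_mem d a)
            ((LL d).mul_mem (c_mem d _ hwi) hmm)), ?_⟩
        rw [anti1z (cbc d (w ii) FL) b, spull, anti1z (d.c_anti FL (w ii) (Ne.symm hwi)) a,
          spull, spull, shz2 ((c_EE_comm d (w ii) hwi).symm), h,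
          shz2 (c_EE_comm d (w ii) hwi), spull b (EE d) ((-1:A)^a * (d.c (w ii) * mm)),
          spull a (EE d) (d.c (w ii) * mm)]
    · -- generator cb jj
      rw [shz2 (sbcb d wb jj), shz2 (d.comm_σcb w (wb jj))]
      by_cases hwj : wb jj = FL
      · rw [hwj]
        obtain ⟨mm, hmm, h⟩ := ih hl' a (b+1) w wb
        refine ⟨mm, hmm, ?_⟩
        rw [← mul_assoc (d.cb FL ^ b) (d.cb FL), ← pow_succ]
        exact h
      · obtain ⟨mm, hmm, h⟩ := ih hl' a b w wb
        refine ⟨(-1:A)^b * ((-1:A)^a * (d.cb (wb jj) * mm)),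
          (LL d).mul_mem (neg_pow_mem d b) ((LL d).mul_mem (neg_pow_mem d a)
            ((LL d).mul_mem (cb_mem d _ hwj) hmm)), ?_⟩
        rw [anti1z (d.cb_anti FL (wb jj) (Ne.symm hwj)) b, spull,
          anti1z (d.anti_ccb FL (wb jj)) a,
          spull, spull, shz2 ((cb_EE_comm d (wb jj) hwj).symm), h,
          shz2 (cb_EE_comm d (wb jj) hwj), spull b (EE d) ((-1:A)^a * (d.cb (wb jj) * mm)),
          spull a (EE d) (d.cb (wb jj) * mm)]
    · -- generator e
      have hge : g = d.e := hg
      subst hge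
      rw [move_e d w wb (l.prod * EE d)]
      by_cases hi : w F0 = FL <;> by_cases hj : wb F0 = FL
      · -- E0 FL FL = EE : everything dies
        rw [hi, hj, E0_FL_FL]
        refine ⟨0, (LL d).zero_mem, ?_⟩
        rw [mul_zero]
        exact EGEz d a b _
      · -- i = FL, j ≠ FL
        rw [hi, E0_FL_right d (wb F0)]
        simp only [mul_assoc]
        have hvjfix : (Equiv.swap F0 (wb F0) : Perm (Fin (m+2))) FL = FL := swapF0_fix hj
        have hsemi1 : SemiconjBy (d.σb (Equiv.swap F0 (wb F0))) (d.cb FL) (d.cb FL) := by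
          show _ = _
          rw [sbcb d _ FL, hvjfix]
        have hsemi2 : SemiconjBy (d.σb (Equiv.swap F0 FL)) (d.cb F0) (d.cb FL) := by
          show _ = _
          rw [sbcb d _ F0, Equiv.swap_apply_left]
        obtain ⟨mm, hmm, h0⟩ := ih hl' 0 0 w
          ((Equiv.swap F0 FL * Equiv.swap F0 (wb F0)) * wb)
        simp only [pow_zero, one_mul] at h0
        refine ⟨(-1:A)^(a/2) * (d.σb (Equiv.swap F0 (wb F0)) *
            (d.cb F0 ^ (a % 2) * (d.cb F0 ^ b * mm))),
          (LL d).mul_mem (neg_pow_mem d (a/2)) ((LL d).mul_mem (σb_mem d _ hvjfix)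
            ((LL d).mul_mem (pow_mem (cb_mem d F0 F0_ne_FL) _)
              ((LL d).mul_mem (pow_mem (cb_mem d F0 F0_ne_FL) _) hmm))), ?_⟩
        rw [shz2 ((hsemi1.pow_right b).eq.symm),
          shz2 ((SemiconjBy.pow_right (d.comm_σbc (Equiv.swap F0 (wb F0)) FL) a).eq.symm),
          shz2 ((σb_EE_comm d _ hvjfix).symm),
          shz2 ((hsemi2.pow_right b).eq.symm),
          shz2 ((SemiconjBy.pow_right (d.comm_σbc (Equiv.swap F0 FL) FL) a).eq.symm),
          cbpowz d F0 F0_ne_FL b, CORE7 d a _, ← cbpowz d F0 F0_ne_FL b,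
          σbσb d (Equiv.swap F0 FL) (Equiv.swap F0 (wb F0)),
          shz2 ((d.comm_σσb w (Equiv.swap F0 FL * Equiv.swap F0 (wb F0))).symm),
          σbσb d (Equiv.swap F0 FL * Equiv.swap F0 (wb F0)) wb, h0,
          spull (a/2) (EE d) _, shz2 ((σb_EE_comm d _ hvjfix).symm),
          ← cbpowz d F0 F0_ne_FL (a % 2), ← cbpowz d F0 F0_ne_FL b,
          spull (a/2) (d.σb (Equiv.swap F0 (wb F0))) _]
      · -- i ≠ FL, j = FL
        rw [hj, E0_FL_left d (w F0)]
        simp only [mul_assoc]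
        have hvifix : (Equiv.swap F0 (w F0) : Perm (Fin (m+2))) FL = FL := swapF0_fix hi
        have hsemi1 : SemiconjBy (d.σ (Equiv.swap F0 (w F0))) (d.c FL) (d.c FL) := by
          show _ = _
          rw [sc d _ FL, hvifix]
        have hsemi2 : SemiconjBy (d.σ (Equiv.swap F0 FL)) (d.c F0) (d.c FL) := by
          show _ = _
          rw [sc d _ F0, Equiv.swap_apply_left]
        obtain ⟨mm, hmm, h0⟩ := ih hl' 0 0
          ((Equiv.swap F0 FL * Equiv.swap F0 (w F0)) * w) wb
        simp only [pow_zero, one_mul] at h0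
        refine ⟨(-1:A)^(a*(b%2)) * (d.σ (Equiv.swap F0 (w F0)) *
            (d.c F0 ^ (b % 2) * (d.c F0 ^ a * mm))),
          (LL d).mul_mem (neg_pow_mem d _) ((LL d).mul_mem (σ_mem d _ hvifix)
            ((LL d).mul_mem (pow_mem (c_mem d F0 F0_ne_FL) _)
              ((LL d).mul_mem (pow_mem (c_mem d F0 F0_ne_FL) _) hmm))), ?_⟩
        rw [shz2 ((SemiconjBy.pow_right (d.comm_σcb (Equiv.swap F0 (w F0)) FL) b).eq.symm),
          shz2 ((hsemi1.pow_right a).eq.symm),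
          shz2 ((σ_EE_comm d _ hvifix).symm),
          shz2 ((SemiconjBy.pow_right (d.comm_σcb (Equiv.swap F0 FL) FL) b).eq.symm),
          shz2 ((hsemi2.pow_right a).eq.symm),
          CORE6 d a b _, ← cpowz d F0 F0_ne_FL a,
          σσ d (Equiv.swap F0 FL) (Equiv.swap F0 (w F0)),
          σσ d (Equiv.swap F0 FL * Equiv.swap F0 (w F0)) w, h0,
          spull (a*(b%2)) (EE d) _, shz2 ((σ_EE_comm d _ hvifix).symm),
          ← cpowz d F0 F0_ne_FL (b % 2), ← cpowz d F0 F0_ne_FL a,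
          spull (a*(b%2)) (d.σ (Equiv.swap F0 (w F0))) _]
      · -- i ≠ FL, j ≠ FL
        have hE0b : Commute (d.cb FL) (E0 d (w F0) (wb F0)) := cbL_E0_comm d _ _ hi hj
        have hE0c : Commute (d.c FL) (E0 d (w F0) (wb F0)) := cL_E0_comm d _ _ hi hj
        obtain ⟨mm, hmm, h⟩ := ih hl' a b w wb
        refine ⟨E0 d (w F0) (wb F0) * mm,
          (LL d).mul_mem (E0_mem d _ _ hi hj) hmm, ?_⟩
        rw [shz2 ((hE0b.pow_left b).eq), shz2 ((hE0c.pow_left a).eq),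
          shz2 ((COMM d _ (E0_mem d _ _ hi hj)).symm), h,
          shz2 (COMM d _ (E0_mem d _ _ hi hj))]

end K2
end Prf
namespace Prf
open Equiv
variable {R A : Type} [CommRing R] [Ring A] [Algebra R A]

section K2
variable {m : ℕ} (d : WBC R A (m+2) (m+2))

lemma E_eq_EE : d.E (m+2) (m+2) = EE d := by
  have hsw : sw (m+2) (1-1) (m+2-1) = (sig0 : Perm (Fin (m+2))) := by
    rw [sw_eq (by omega) (by omega)]
    rfl
  show d.σb (sw (m+2) (1-1) ((m+2)-1)) * d.σ (sw (m+2) (1-1) ((m+2)-1)) * d.e *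
    d.σ (sw (m+2) (1-1) ((m+2)-1)) * d.σb (sw (m+2) (1-1) ((m+2)-1)) = EE d
  rw [hsw, ← d.comm_σσb sig0 sig0]
  unfold EE
  simp only [mul_assoc]

end K2
end Prf

/-- Proposition 2.7: `e_k BC_{k,k} e_k = e_k BC_{k-1,k-1}` for `k ≥ 2`, where
`BC_{k-1,k-1}` is the subalgebra generated by `e_1, s_1, …, s_{k-2}, s̄_1, …, s̄_{k-2}, c_1, c̄_1`;
moreover `e_1 BC_{1,1} e_1 = 0`. -/
theorem statement1 (R A : Type) [CommRing R] [IsDomain R] [Ring A] [Algebra R A]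
    (h2 : IsUnit (2 : R)) (k : ℕ) (hk : 1 ≤ k)
    (d : WBC R A k k) (hu : d.IsUniversal) :
    (2 ≤ k →
      Set.range (fun a : A => d.E k k * a * d.E k k)
        = (fun b : A => d.E k k * b) '' (↑(Algebra.adjoin R (d.lowerGens (k - 1))) : Set A)) ∧
    (k = 1 → ∀ a : A, d.e * a * d.e = 0) := by
  constructor
  · intro hk2
    obtain ⟨m, rfl⟩ : ∃ m, k = m + 2 := ⟨k - 2, by omega⟩
    have hE := Prf.E_eq_EE d
    have hL : d.lowerGens (m + 2 - 1) = d.lowerGens (m + 1) := rfl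
    simp only [hE, hL]
    ext y
    constructor
    · rintro ⟨a, rfl⟩
      have ha : a ∈ Submodule.span R (↑(Submonoid.closure (Prf.fullGens d)) : Set A) := by
        have h1 := Prf.mem_adjoin_fullGens d hu a
        rw [← Subalgebra.mem_toSubmodule, Algebra.adjoin_eq_span] at h1
        exact h1
      have key : ∃ mm ∈ Prf.LL d, Prf.EE d * a * Prf.EE d = Prf.EE d * mm := by
        induction ha using Submodule.span_induction with
        | mem x hx =>
          obtain ⟨l, hl, rfl⟩ := Submonoid.exists_list_of_mem_closure hx
          obtain ⟨mm, hmm, h⟩ := Prf.scan d l hl 0 0 1 1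
          simp only [pow_zero, one_mul, map_one] at h
          exact ⟨mm, hmm, by rw [mul_assoc]; exact h⟩
        | zero =>
          exact ⟨0, (Prf.LL d).zero_mem, by rw [mul_zero, zero_mul]⟩
        | add x y hx hy ihx ihy =>
          obtain ⟨m1, h1, e1⟩ := ihx
          obtain ⟨m2, h2', e2⟩ := ihy
          exact ⟨m1 + m2, add_mem h1 h2', by rw [mul_add, add_mul, e1, e2, ← mul_add]⟩
        | smul r x hx ihx =>
          obtain ⟨m1, h1, e1⟩ := ihx
          refine ⟨r • m1, (Prf.LL d).smul_mem h1 r, ?_⟩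
          rw [mul_smul_comm, smul_mul_assoc, e1, mul_smul_comm]
      obtain ⟨mm, hmm, h⟩ := key
      exact ⟨mm, hmm, h.symm⟩
    · rintro ⟨b, hb, rfl⟩
      refine ⟨d.σ (Equiv.swap Prf.F0 Prf.FL) * b, ?_⟩
      show Prf.EE d * (d.σ (Equiv.swap Prf.F0 Prf.FL) * b) * Prf.EE d = Prf.EE d * b
      rw [mul_assoc (Prf.EE d), mul_assoc, Prf.COMM d b hb]
      exact Prf.F9σz d Prf.F0 Prf.F0_ne_FL b
  · intro hk1
    subst hk1
    intro a
    exact Prf.k1_main d hu a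
end
end

section
/- In the affine walled Brauer-Clifford superalgebra BC^{aff}_{r,t}, suppose e_1 is torsion-free over the subring R[ω_3, ω_5, …, ω̄_1, ω̄_2, …] generated by the central generators (i.e. h e_1 = 0 with h in this subring forces h = 0). Then ω̄_{2n+1} = Σ_{i=0}^{n} a_{2n+1,i} ω_{2i+1} and ω̄_{2n} = 0 for all n ∈ ℕ, where the coefficients a_{2n+1,i} ∈ R[ω_3, …, ω_{2n−1}] are determined by the recursion a_{1,0} = −1, a_{2n+1,n} = −1, a_{2n+1,j} = a_{2n−1,j−1} for 1 ≤ j ≤ n−1, and a_{2n+1,0} = Σ_{j=0}^{n−1} a_{2n−1,j} ω_{2j+1}. In particular ω̄_1 = −ω_1. -/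
open Polynomial

noncomputable section

/-! ### Auxiliary lemmas for Statement 7 -/

section Stmt7Aux

variable {A : Type} [Ring A]

lemma acoef_succ_succ (ω : ℕ → A) (n j : ℕ) : acoef ω (n + 1) (j + 1) = acoef ω n j := rfl

lemma acoef_succ_zero (ω : ℕ → A) (n : ℕ) :
    acoef ω (n + 1) 0 = ∑ j ∈ Finset.range (n + 1), acoef ω n j * ω (2 * j + 1) := rfl

lemma acoef_diag (ω : ℕ → A) : ∀ n, acoef ω n n = -1
  | 0 => rfl
  | n + 1 => acoef_diag ω n

/-- The sum `S_n = ∑_{j≤n} a_{2n+1,j} ω_{2j+1}`. -/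
def Ssum (ω : ℕ → A) (n : ℕ) : A := ∑ j ∈ Finset.range (n + 1), acoef ω n j * ω (2 * j + 1)

lemma acoef_shift (ω : ℕ → A) : ∀ b a, acoef ω (a + b + 1) b = Ssum ω a
  | 0, a => rfl
  | b + 1, a => by
      have h : a + (b + 1) + 1 = (a + b + 1) + 1 := by omega
      rw [h, acoef_succ_succ, acoef_shift ω b a]

lemma acoef_eq_Ssum (ω : ℕ → A) (n j : ℕ) (h : j < n) : acoef ω n j = Ssum ω (n - 1 - j) := by
  have h' : (n - 1 - j) + j + 1 = n := by omega
  conv_lhs => rw [← h']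
  exact acoef_shift ω j (n - 1 - j)

lemma Srec (ω : ℕ → A) (n : ℕ) :
    Ssum ω n = -(ω (2 * n + 1))
      + ∑ m ∈ Finset.range n, Ssum ω m * ω (2 * (n - 1 - m) + 1) := by
  cases n with
  | zero => simp [Ssum, acoef]
  | succ n =>
    have lhs : Ssum ω (n + 1)
        = (∑ j ∈ Finset.range (n + 1), acoef ω n j * ω (2 * (j + 1) + 1))
          + Ssum ω n * ω 1 := by
      rw [Ssum, Finset.sum_range_succ']
      simp only [acoef_succ_succ, acoef_succ_zero, Nat.mul_zero, Nat.zero_add, Ssum]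
    have rhs : (∑ m ∈ Finset.range (n + 1), Ssum ω m * ω (2 * (n + 1 - 1 - m) + 1))
        = (∑ m ∈ Finset.range n, Ssum ω m * ω (2 * (n + 1 - 1 - m) + 1)) + Ssum ω n * ω 1 := by
      rw [Finset.sum_range_succ]
      norm_num
    rw [lhs, rhs]
    have key : (∑ j ∈ Finset.range (n + 1), acoef ω n j * ω (2 * (j + 1) + 1))
        = -(ω (2 * (n + 1) + 1)) + ∑ m ∈ Finset.range n, Ssum ω m * ω (2 * (n + 1 - 1 - m) + 1) := by
      rw [Finset.sum_range_succ, acoef_diag]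
      have hrefl : (∑ m ∈ Finset.range n, Ssum ω m * ω (2 * (n + 1 - 1 - m) + 1))
          = ∑ j ∈ Finset.range n, Ssum ω (n - 1 - j) * ω (2 * (n + 1 - 1 - (n - 1 - j)) + 1) := by
        rw [← Finset.sum_range_reflect]
      rw [hrefl]
      have congr1 : (∑ j ∈ Finset.range n, acoef ω n j * ω (2 * (j + 1) + 1))
          = ∑ j ∈ Finset.range n, Ssum ω (n - 1 - j) * ω (2 * (n + 1 - 1 - (n - 1 - j)) + 1) := by
        refine Finset.sum_congr rfl (fun j hj => ?_)
        rw [Finset.mem_range] at hj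
        rw [acoef_eq_Ssum ω n j hj]
        congr 2
        omega
      rw [congr1]
      rw [neg_one_mul]
      abel
    rw [key]
    abel

/-- Sums over `range (2n+1)` of a function vanishing at even indices. -/
lemma sum_odd_only (g : ℕ → A) (hg : ∀ m, g (2 * m) = 0) :
    ∀ n, (∑ i ∈ Finset.range (2 * n + 1), g i) = ∑ m ∈ Finset.range n, g (2 * m + 1)
  | 0 => by simpa using hg 0
  | n + 1 => by
      have h1 : 2 * (n + 1) + 1 = (2 * n + 1) + 1 + 1 := by omega
      rw [h1, Finset.sum_range_succ, Finset.sum_range_succ, sum_odd_only g hg n,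
        Finset.sum_range_succ]
      have h2 : 2 * n + 1 + 1 = 2 * (n + 1) := by omega
      rw [h2, hg]
      abel

end Stmt7Aux

/-- The core sandwich computation: in any ring with elements satisfying the
relevant relations of `BC^aff`, `ω̄_k e` is determined by the `ω`'s and lower `ω̄`'s. -/
lemma stmt7core {A : Type} [Ring A] (e X Y c1 : A) (om omb : ℕ → A)
    (h2 : ∀ a : A, a + a = 0 → a = 0)
    (he2 : e * e = 0)
    (hc1 : c1 * c1 = -1)
    (hXc : X * c1 = -(c1 * X))
    (hYc : Y * c1 = c1 * Y)
    (heX : e * X = -(e * Y))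
    (hXe : X * e = -(Y * e))
    (hece : e * c1 * e = 0)
    (hmix : X * (e + Y - c1 * e * c1) = (e - c1 * e * c1 + Y) * X)
    (hexe : ∀ m, e * X ^ m * e = om m * e)
    (heye : ∀ m, e * Y ^ m * e = omb m * e)
    (homX : ∀ k, om k * X = X * om k)
    (homY : ∀ k, om k * Y = Y * om k)
    (home : ∀ k, om k * e = e * om k)
    (homc : ∀ k, om k * c1 = c1 * om k)
    (homomb : ∀ k l, om k * omb l = omb l * om k)
    (k : ℕ) :
    omb k * e = ((-1 : ℤ) ^ k) • (om k * e)
      - ∑ i ∈ Finset.range k, ((-1 : ℤ) ^ (k - 1 - i)) • (omb i * (om (k - 1 - i) * e)) := by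
  obtain ⟨Eb, hEb⟩ : ∃ Eb, Eb = c1 * e * c1 := ⟨_, rfl⟩
  obtain ⟨Z, hZ⟩ : ∃ Z, Z = Y + e - Eb := ⟨_, rfl⟩
  have hcX : c1 * X = -(X * c1) := by rw [hXc, neg_neg]
  have hece' : e * (c1 * e) = 0 := by rw [← mul_assoc, hece]
  have hexe'' : ∀ m, e * (X ^ m * e) = om m * e := fun m => by rw [← mul_assoc, hexe]
  have heye'' : ∀ m, e * (Y ^ m * e) = omb m * e := fun m => by rw [← mul_assoc, heye]
  have hexeW : ∀ (m : ℕ) (w : A), e * (X ^ m * (e * w)) = om m * (e * w) := by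
    intro m w
    calc e * (X ^ m * (e * w)) = e * X ^ m * e * w := by simp only [mul_assoc]
    _ = om m * (e * w) := by rw [hexe, mul_assoc]
  have heXW : ∀ w : A, e * (X * w) = -(e * (Y * w)) := by
    intro w
    rw [← mul_assoc, heX, neg_mul, mul_assoc]
  have homXpow : ∀ k m, om k * X ^ m = X ^ m * om k := fun k m =>
    Commute.pow_right (homX k) m
  have homYpow : ∀ k m, om k * Y ^ m = Y ^ m * om k := fun k m =>
    Commute.pow_right (homY k) m
  have hcXpow : ∀ m : ℕ, c1 * X ^ m = ((-1 : ℤ) ^ m) • (X ^ m * c1) := by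
    intro m
    induction m with
    | zero => simp
    | succ m ih =>
      rw [pow_succ, ← mul_assoc, ih, smul_mul_assoc, mul_assoc, hcX, pow_succ, mul_smul,
        neg_one_zsmul, mul_neg, smul_neg, mul_assoc, smul_neg]
  have hYce : Y * (c1 * e) = X * (c1 * e) := by
    calc Y * (c1 * e) = c1 * (Y * e) := by rw [← mul_assoc, hYc, mul_assoc]
    _ = -(c1 * (X * e)) := by rw [hXe, mul_neg, neg_neg]
    _ = X * (c1 * e) := by rw [← mul_assoc c1 X e, hcX, neg_mul, neg_neg, mul_assoc]
  have hYX : Y * X = X * Y + (X * e - e * X - X * Eb + Eb * X) := by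
    rw [hEb]
    calc Y * X = (e - c1 * e * c1 + Y) * X - (e - c1 * e * c1) * X := by noncomm_ring
    _ = X * (e + Y - c1 * e * c1) - (e - c1 * e * c1) * X := by rw [hmix]
    _ = X * Y + (X * e - e * X - X * (c1 * e * c1) + (c1 * e * c1) * X) := by noncomm_ring
  have hYXn : ∀ n : ℕ, Y * X ^ n = X ^ n * Y
      + ∑ i ∈ Finset.range n, X ^ i * ((X * e - e * X - X * Eb + Eb * X) * X ^ (n - 1 - i)) := by
    intro n
    induction n with
    | zero => simp
    | succ n ih =>
      have hsum : ∀ i ∈ Finset.range n,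
          (X ^ i * ((X * e - e * X - X * Eb + Eb * X) * X ^ (n - 1 - i))) * X
            = X ^ i * ((X * e - e * X - X * Eb + Eb * X) * X ^ (n + 1 - 1 - i)) := by
        intro i hi
        rw [Finset.mem_range] at hi
        rw [mul_assoc, mul_assoc, ← pow_succ]
        have h1 : n - 1 - i + 1 = n + 1 - 1 - i := by omega
        rw [h1]
      calc Y * X ^ (n + 1) = (Y * X ^ n) * X := by rw [pow_succ, ← mul_assoc]
      _ = (X ^ n * Y) * X + ∑ i ∈ Finset.range n,
            (X ^ i * ((X * e - e * X - X * Eb + Eb * X) * X ^ (n - 1 - i))) * X := by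
          rw [ih, add_mul, Finset.sum_mul]
      _ = X ^ (n + 1) * Y + (∑ i ∈ Finset.range n,
            X ^ i * ((X * e - e * X - X * Eb + Eb * X) * X ^ (n + 1 - 1 - i))
            + X ^ n * ((X * e - e * X - X * Eb + Eb * X) * X ^ (n + 1 - 1 - n))) := by
          rw [Finset.sum_congr rfl hsum]
          rw [mul_assoc (X ^ n) Y X, hYX, mul_add, ← mul_assoc (X ^ n) X Y, ← pow_succ]
          have hnn : n + 1 - 1 - n = 0 := by omega
          rw [hnn, pow_zero, mul_one]
          abel
      _ = X ^ (n + 1) * Y + ∑ i ∈ Finset.range (n + 1),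
            X ^ i * ((X * e - e * X - X * Eb + Eb * X) * X ^ (n + 1 - 1 - i)) := by
          rw [Finset.sum_range_succ]
  have hEbXc : ∀ b : ℕ, Eb * (X ^ b * (c1 * e))
      = -(((-1 : ℤ) ^ b) • (c1 * (e * (X ^ b * e)))) := by
    intro b
    rw [hEb]
    have h1 : c1 * (X ^ b * (c1 * e)) = -(((-1 : ℤ) ^ b) • (X ^ b * e)) := by
      rw [← mul_assoc, hcXpow, smul_mul_assoc, mul_assoc, ← mul_assoc c1 c1 e, hc1,
        neg_one_mul, mul_neg, smul_neg]
    calc c1 * e * c1 * (X ^ b * (c1 * e)) = c1 * (e * (c1 * (X ^ b * (c1 * e)))) := by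
          rw [mul_assoc, mul_assoc]
    _ = -(((-1 : ℤ) ^ b) • (c1 * (e * (X ^ b * e)))) := by
          rw [h1, mul_neg, mul_smul_comm, mul_neg, mul_smul_comm]
  have hq_move : ∀ a b : ℕ, e * (X ^ a * (c1 * (e * (X ^ b * e))))
      = om b * (e * (X ^ a * (c1 * e))) := by
    intro a b
    rw [hexe'' b, ← mul_assoc c1 (om b) e, ← homc b, mul_assoc (om b) c1 e,
      ← mul_assoc (X ^ a) (om b) (c1 * e), ← homXpow b a, mul_assoc (om b) (X ^ a) (c1 * e),
      ← mul_assoc e (om b) (X ^ a * (c1 * e)), ← home b, mul_assoc (om b) e (X ^ a * (c1 * e))]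
  have hqe : ∀ j : ℕ, e * (X ^ j * (c1 * e)) = 0 := by
    intro j
    induction j using Nat.strong_induction_on with
    | _ j IH =>
    match j with
    | 0 => simpa using hece'
    | (n + 1) =>
      have hterm : ∀ i ∈ Finset.range n,
          e * (X ^ i * ((X * e - e * X - X * Eb + Eb * X) * X ^ (n - 1 - i) * (c1 * e))) = 0 := by
        intro i hi
        rw [Finset.mem_range] at hi
        have hbn : n - 1 - i < n + 1 := by omega
        have hbn1 : (n - 1 - i) + 1 < n + 1 := by omega
        have hin1 : i + 1 < n + 1 := by omega
        have hin : i < n + 1 := by omega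
        rw [mul_assoc (X * e - e * X - X * Eb + Eb * X) (X ^ (n - 1 - i)) (c1 * e)]
        have hD : (X * e - e * X - X * Eb + Eb * X) * (X ^ (n - 1 - i) * (c1 * e))
            = X * (e * (X ^ (n - 1 - i) * (c1 * e))) - e * (X ^ ((n - 1 - i) + 1) * (c1 * e))
              - X * (Eb * (X ^ (n - 1 - i) * (c1 * e))) + Eb * (X ^ ((n - 1 - i) + 1) * (c1 * e)) := by
          have hv : X ^ ((n - 1 - i) + 1) * (c1 * e) = X * (X ^ (n - 1 - i) * (c1 * e)) := by
            rw [pow_succ', mul_assoc]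
          rw [hv]
          noncomm_ring
        rw [hD, IH (n - 1 - i) hbn, IH ((n - 1 - i) + 1) hbn1]
        have hA : e * (X ^ i * (X * (Eb * (X ^ (n - 1 - i) * (c1 * e))))) = 0 := by
          rw [hEbXc (n - 1 - i), mul_neg, mul_smul_comm, mul_neg, mul_smul_comm, mul_neg,
            mul_smul_comm, ← mul_assoc (X ^ i) X (c1 * (e * (X ^ (n - 1 - i) * e))),
            ← pow_succ, hq_move (i + 1) (n - 1 - i), IH (i + 1) hin1]
          simp
        have hB : e * (X ^ i * (Eb * (X ^ ((n - 1 - i) + 1) * (c1 * e)))) = 0 := by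
          rw [hEbXc ((n - 1 - i) + 1), mul_neg, mul_smul_comm, mul_neg, mul_smul_comm,
            hq_move i ((n - 1 - i) + 1), IH i hin]
          simp
        have hre : X * (0 : A) - 0 - X * (Eb * (X ^ (n - 1 - i) * (c1 * e)))
            + Eb * (X ^ ((n - 1 - i) + 1) * (c1 * e))
            = Eb * (X ^ ((n - 1 - i) + 1) * (c1 * e))
              - X * (Eb * (X ^ (n - 1 - i) * (c1 * e))) := by
          rw [mul_zero]
          abel
        rw [hre, mul_sub, mul_sub, hA, hB, sub_zero]
      have hsplit : e * (X ^ (n + 1) * (c1 * e)) = -(e * (Y * (X ^ n * (c1 * e)))) := by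
        rw [pow_succ', mul_assoc, heXW]
      have hexp : e * (Y * (X ^ n * (c1 * e))) = e * (X ^ (n + 1) * (c1 * e)) := by
        rw [← mul_assoc Y (X ^ n) (c1 * e), hYXn n, add_mul, mul_add]
        have hsum0 : e * ((∑ i ∈ Finset.range n,
            X ^ i * ((X * e - e * X - X * Eb + Eb * X) * X ^ (n - 1 - i))) * (c1 * e)) = 0 := by
          rw [Finset.sum_mul, Finset.mul_sum]
          refine Finset.sum_eq_zero (fun i hi => ?_)
          rw [mul_assoc (X ^ i) ((X * e - e * X - X * Eb + Eb * X) * X ^ (n - 1 - i)) (c1 * e)]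
          exact hterm i hi
        rw [hsum0, add_zero, mul_assoc (X ^ n) Y (c1 * e), hYce,
          ← mul_assoc (X ^ n) X (c1 * e), ← pow_succ]
      rw [hexp] at hsplit
      refine h2 _ ?_
      nth_rewrite 1 [hsplit]
      exact neg_add_cancel _
  have hEbXe : ∀ m : ℕ, Eb * (X ^ m * e) = 0 := by
    intro m
    rw [hEb, mul_assoc, mul_assoc, ← mul_assoc c1 (X ^ m) e, hcXpow, smul_mul_assoc,
      mul_assoc (X ^ m) c1 e, mul_smul_comm, hqe m, smul_zero, mul_zero]
  have hEbe : Eb * e = 0 := by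
    have h := hEbXe 0
    rwa [pow_zero, one_mul] at h
  have hXZ : X * Z = Z * X := by
    rw [hZ, hEb]
    calc X * (Y + e - c1 * e * c1) = X * (e + Y - c1 * e * c1) := by noncomm_ring
    _ = (e - c1 * e * c1 + Y) * X := hmix
    _ = (Y + e - c1 * e * c1) * X := by noncomm_ring
  have hC : Commute X Z := hXZ
  have hZe : Z * e = -(X * e) := by
    rw [hZ, sub_mul, add_mul, he2, hEbe, hXe]
    simp
  have hZpe : ∀ m : ℕ, Z ^ m * e = ((-1 : ℤ) ^ m) • (X ^ m * e) := by
    intro m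
    induction m with
    | zero => simp
    | succ m ih =>
      have hcm : Z ^ m * X = X * Z ^ m := (hC.symm.pow_left m)
      rw [pow_succ, mul_assoc, hZe, mul_neg, ← mul_assoc, hcm, mul_assoc, ih, mul_smul_comm,
        ← mul_assoc X (X ^ m) e, ← pow_succ', pow_succ (-1 : ℤ) m, mul_smul, neg_one_zsmul,
        smul_neg]
  have heZe : ∀ m : ℕ, e * (Z ^ m * e) = ((-1 : ℤ) ^ m) • (om m * e) := by
    intro m
    rw [hZpe m, mul_smul_comm, hexe'' m]
  have hEbZe : ∀ m : ℕ, Eb * (Z ^ m * e) = 0 := by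
    intro m
    rw [hZpe m, mul_smul_comm, hEbXe m, smul_zero]
  have hY : Y = Z - e + Eb := by rw [hZ]; abel
  have hYZe : ∀ j : ℕ, Y * (Z ^ j * e) = Z ^ (j + 1) * e - ((-1 : ℤ) ^ j) • (om j * e) := by
    intro j
    rw [hY, add_mul, sub_mul, heZe j, hEbZe j, ← mul_assoc, ← pow_succ']
    abel
  have hF : ∀ m j : ℕ, e * (Y ^ m * (Z ^ j * e))
      = ((-1 : ℤ) ^ (m + j)) • (om (m + j) * e)
        - ∑ i ∈ Finset.range m, ((-1 : ℤ) ^ (j + m - 1 - i)) • (omb i * (om (j + m - 1 - i) * e)) := by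
    intro m
    induction m with
    | zero => intro j; simpa using heZe j
    | succ m ih =>
      intro j
      have h1 : e * (Y ^ (m + 1) * (Z ^ j * e)) = e * (Y ^ m * (Y * (Z ^ j * e))) := by
        rw [pow_succ, mul_assoc]
      have h2' : e * (Y ^ m * (((-1 : ℤ) ^ j) • (om j * e)))
          = ((-1 : ℤ) ^ j) • (omb m * (om j * e)) := by
        rw [mul_smul_comm, mul_smul_comm, ← mul_assoc (Y ^ m) (om j) e, ← homYpow j m,
          mul_assoc (om j) (Y ^ m) e, ← mul_assoc e (om j) (Y ^ m * e), ← home j,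
          mul_assoc (om j) e (Y ^ m * e), heye'' m, ← mul_assoc (om j) (omb m) e, homomb j m,
          mul_assoc (omb m) (om j) e]
      rw [h1, hYZe j, mul_sub, mul_sub, h2', ih (j + 1), Finset.sum_range_succ]
      have e1 : m + (j + 1) = m + 1 + j := by omega
      have e2 : j + (m + 1) - 1 - m = j := by omega
      rw [e1, e2]
      have e3 : (∑ i ∈ Finset.range m, ((-1 : ℤ) ^ (j + 1 + m - 1 - i)) • (omb i * (om (j + 1 + m - 1 - i) * e)))
          = ∑ i ∈ Finset.range m, ((-1 : ℤ) ^ (j + (m + 1) - 1 - i)) • (omb i * (om (j + (m + 1) - 1 - i) * e)) := by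
        refine Finset.sum_congr rfl (fun i hi => ?_)
        have h4 : j + 1 + m - 1 - i = j + (m + 1) - 1 - i := by omega
        rw [h4]
      rw [e3]
      abel
  have hfin := hF k 0
  rw [pow_zero, one_mul, heye'' k] at hfin
  simpa using hfin

/-- Corollary 3.5: if `e_1` is torsion-free over the subring
`R[ω_3, ω_5, …, ω̄_1, ω̄_2, …]`, then `ω̄_{2n+1} = ∑_{i=0}^n a_{2n+1,i} ω_{2i+1}` and
`ω̄_{2n} = 0`; in particular `ω̄_1 = -ω_1`. -/
theorem statement7 (R A : Type) [CommRing R] [IsDomain R] [Ring A] [Algebra R A]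
    (h2 : IsUnit (2 : R)) (r t : ℕ) (hr : 1 ≤ r) (ht : 1 ≤ t) (ω1 : R)
    (d : AWBC R A r t ω1) (hu : d.IsUniversal)
    (htf : ∀ h ∈ Algebra.adjoin R
        ({x : A | ∃ n : ℕ, 1 ≤ n ∧ x = d.om (2 * n + 1)} ∪
          {x : A | ∃ k : ℕ, 1 ≤ k ∧ x = d.omb k}),
      h * d.e = 0 → h = 0) :
    (∀ n : ℕ, d.omb (2 * n + 1)
      = ∑ j ∈ Finset.range (n + 1), acoef d.om n j * d.om (2 * j + 1)) ∧
    (∀ n : ℕ, d.omb (2 * n) = 0) ∧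
    d.omb 1 = -algebraMap R A ω1 ∧
    (∀ n j : ℕ, j ≤ n → acoef d.om n j ∈
      Algebra.adjoin R {x : A | ∃ l : ℕ, 1 ≤ l ∧ l + 1 ≤ n ∧ x = d.om (2 * l + 1)}) := by
  have hr' : 0 < r := hr
  have ht' : 0 < t := ht
  -- two-torsion-freeness of A
  have h2A : ∀ a : A, a + a = 0 → a = 0 := by
    intro a ha
    have hu2 : IsUnit (2 : A) := by
      have h := h2.map (algebraMap R A)
      rwa [map_ofNat] at h
    have h0 : (2 : A) * a = 0 := by rw [two_mul]; exact ha
    exact hu2.mul_right_eq_zero.mp h0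
  -- sandwich relations
  have hexe : ∀ m, d.e * d.x1 ^ m * d.e = d.om m * d.e := by
    intro m
    rcases Nat.even_or_odd m with hm | hm
    · obtain ⟨kk, hk⟩ := hm
      have hk2 : m = 2 * kk := by omega
      subst hk2
      rcases Nat.eq_zero_or_pos kk with rfl | hkpos
      · have h0 : d.om (2 * 0) = 0 := d.om_even 0
        rw [h0, zero_mul]
        norm_num [d.toWBC.e_sq]
      · rw [d.e_xeven kk hkpos, d.om_even kk, zero_mul]
    · obtain ⟨kk, hk⟩ := hm
      subst hk
      exact d.e_xodd kk
  have heye : ∀ m, d.e * d.xb1 ^ m * d.e = d.omb m * d.e := by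
    intro m
    rcases Nat.eq_zero_or_pos m with rfl | hm
    · rw [pow_zero, mul_one, d.toWBC.e_sq, d.omb_zero, zero_mul]
    · exact d.e_xb m hm
  have heX : d.e * d.x1 = -(d.e * d.xb1) := by
    have h := d.e_xsum
    rw [mul_add] at h
    exact eq_neg_of_add_eq_zero_left h
  have hXe : d.x1 * d.e = -(d.xb1 * d.e) := by
    have h := d.xsum_e
    rw [add_mul] at h
    exact eq_neg_of_add_eq_zero_left h
  have hstar0 := stmt7core d.e d.x1 d.xb1 (d.toWBC.c ⟨0, hr'⟩) d.om d.omb h2A d.toWBC.e_sq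
    (d.toWBC.c_sq ⟨0, hr'⟩) (d.x1_c1 hr') (d.xb1_c_comm ⟨0, hr'⟩) heX hXe
    (d.toWBC.e_c_e hr') (d.x_mixed hr')
    hexe heye
    (fun k => (d.om_comm k).2.2.2.2.2.1)
    (fun k => (d.om_comm k).2.2.2.2.2.2.1)
    (fun k => (d.om_comm k).2.2.2.2.1)
    (fun k => (d.om_comm k).2.2.1 ⟨0, hr'⟩)
    (fun k l => (d.om_comm k).2.2.2.2.2.2.2.2 l)
  -- memberships
  have mem_om : ∀ k, d.om k ∈ Algebra.adjoin R
      ({x : A | ∃ n : ℕ, 1 ≤ n ∧ x = d.om (2 * n + 1)} ∪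
        {x : A | ∃ k : ℕ, 1 ≤ k ∧ x = d.omb k}) := by
    intro k
    rcases Nat.even_or_odd k with hk | hk
    · obtain ⟨m, hm⟩ := hk
      have h1 : k = 2 * m := by omega
      rw [h1, d.om_even m]
      exact zero_mem _
    · obtain ⟨m, hm⟩ := hk
      rcases Nat.eq_zero_or_pos m with rfl | hmp
      · have h1 : k = 1 := by omega
        rw [h1, d.om_one]
        exact Subalgebra.algebraMap_mem _ _
      · exact Algebra.subset_adjoin (Or.inl ⟨m, hmp, by rw [hm]⟩)
  have mem_omb : ∀ k, d.omb k ∈ Algebra.adjoin R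
      ({x : A | ∃ n : ℕ, 1 ≤ n ∧ x = d.om (2 * n + 1)} ∪
        {x : A | ∃ k : ℕ, 1 ≤ k ∧ x = d.omb k}) := by
    intro k
    rcases Nat.eq_zero_or_pos k with rfl | hkp
    · rw [d.omb_zero]; exact zero_mem _
    · exact Algebra.subset_adjoin (Or.inr ⟨k, hkp, rfl⟩)
  -- the scalar recursion
  have hstar : ∀ k, d.omb k = (-1 : A) ^ k * d.om k
      - ∑ i ∈ Finset.range k, (-1 : A) ^ (k - 1 - i) * (d.omb i * d.om (k - 1 - i)) := by
    intro k
    have hz := hstar0 k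
    simp only [zsmul_eq_mul, Int.cast_pow, Int.cast_neg, Int.cast_one] at hz
    have heq0 : (d.omb k - ((-1 : A) ^ k * d.om k
        - ∑ i ∈ Finset.range k, (-1 : A) ^ (k - 1 - i) * (d.omb i * d.om (k - 1 - i))))
        * d.e = 0 := by
      rw [sub_mul, hz, sub_mul, Finset.sum_mul]
      simp only [mul_assoc]
      exact sub_self _
    have hmem : (d.omb k - ((-1 : A) ^ k * d.om k
        - ∑ i ∈ Finset.range k, (-1 : A) ^ (k - 1 - i) * (d.omb i * d.om (k - 1 - i))))
        ∈ Algebra.adjoin R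
          ({x : A | ∃ n : ℕ, 1 ≤ n ∧ x = d.om (2 * n + 1)} ∪
            {x : A | ∃ k : ℕ, 1 ≤ k ∧ x = d.omb k}) := by
      refine sub_mem (mem_omb k) (sub_mem (mul_mem (pow_mem (neg_mem (one_mem _)) k) (mem_om k))
        (Subalgebra.sum_mem _ (fun i hi => mul_mem (pow_mem (neg_mem (one_mem _)) _)
          (mul_mem (mem_omb i) (mem_om _)))))
    have h0 := htf _ hmem heq0
    exact sub_eq_zero.mp h0
  -- even values vanish
  have heven : ∀ n, d.omb (2 * n) = 0 := by
    intro n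
    induction n using Nat.strong_induction_on with
    | _ n IH =>
    rcases Nat.eq_zero_or_pos n with rfl | hn
    · simpa using d.omb_zero
    · rw [hstar (2 * n), d.om_even n, mul_zero]
      have hs : (∑ i ∈ Finset.range (2 * n),
          (-1 : A) ^ (2 * n - 1 - i) * (d.omb i * d.om (2 * n - 1 - i))) = 0 := by
        refine Finset.sum_eq_zero (fun i hi => ?_)
        rw [Finset.mem_range] at hi
        rcases Nat.even_or_odd i with h | h
        · obtain ⟨m, hm⟩ := h
          have him : i = 2 * m := by omega
          have hmn : m < n := by omega
          rw [him, IH m hmn, zero_mul, mul_zero]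
        · obtain ⟨m, hm⟩ := h
          have h1 : 2 * n - 1 - i = 2 * (n - 1 - m) := by omega
          rw [h1, d.om_even, mul_zero, mul_zero]
      rw [hs, sub_zero]
  -- odd values
  have hodd : ∀ n, d.omb (2 * n + 1) = Ssum d.om n := by
    intro n
    induction n using Nat.strong_induction_on with
    | _ n IH =>
    have hk := hstar (2 * n + 1)
    have hneg : (-1 : A) ^ (2 * n + 1) = -1 := Odd.neg_one_pow ⟨n, by omega⟩
    rw [hneg, neg_one_mul] at hk
    have hg0 : ∀ m, (-1 : A) ^ (2 * n + 1 - 1 - 2 * m)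
        * (d.omb (2 * m) * d.om (2 * n + 1 - 1 - 2 * m)) = 0 := by
      intro m
      rw [heven m, zero_mul, mul_zero]
    have hsum : (∑ i ∈ Finset.range (2 * n + 1),
        (-1 : A) ^ (2 * n + 1 - 1 - i) * (d.omb i * d.om (2 * n + 1 - 1 - i)))
        = ∑ m ∈ Finset.range n, -(Ssum d.om m * d.om (2 * (n - 1 - m) + 1)) := by
      rw [sum_odd_only (fun i => (-1 : A) ^ (2 * n + 1 - 1 - i)
        * (d.omb i * d.om (2 * n + 1 - 1 - i))) hg0 n]
      refine Finset.sum_congr rfl (fun m hm => ?_)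
      rw [Finset.mem_range] at hm
      have h1 : 2 * n + 1 - 1 - (2 * m + 1) = 2 * (n - 1 - m) + 1 := by omega
      rw [h1, IH m (by omega)]
      have h2' : (-1 : A) ^ (2 * (n - 1 - m) + 1) = -1 := Odd.neg_one_pow ⟨n - 1 - m, by ring⟩
      rw [h2', neg_one_mul]
    rw [hsum] at hk
    rw [hk, Finset.sum_neg_distrib, sub_neg_eq_add, ← Srec d.om n]
  -- membership of the coefficients
  have hmem4 : ∀ n j, j ≤ n → acoef d.om n j ∈
      Algebra.adjoin R {x : A | ∃ l : ℕ, 1 ≤ l ∧ l + 1 ≤ n ∧ x = d.om (2 * l + 1)} := by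
    intro n
    induction n with
    | zero =>
      intro j hj
      interval_cases j
      exact neg_mem (one_mem _)
    | succ n ihn =>
      intro j hj
      have hsub : {x : A | ∃ l : ℕ, 1 ≤ l ∧ l + 1 ≤ n ∧ x = d.om (2 * l + 1)}
          ⊆ {x : A | ∃ l : ℕ, 1 ≤ l ∧ l + 1 ≤ n + 1 ∧ x = d.om (2 * l + 1)} := by
        rintro x ⟨l, h1, h2', h3⟩
        exact ⟨l, h1, by omega, h3⟩
      have hmono := Algebra.adjoin_mono (R := R) hsub
      cases j with
      | succ j' => exact hmono (ihn j' (by omega))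
      | zero =>
        rw [acoef_succ_zero]
        refine Subalgebra.sum_mem _ (fun i hi => ?_)
        rw [Finset.mem_range] at hi
        refine mul_mem (hmono (ihn i (by omega))) ?_
        rcases Nat.eq_zero_or_pos i with rfl | hip
        · have h1 : (2 * 0 + 1 : ℕ) = 1 := by norm_num
          rw [h1, d.om_one]
          exact Subalgebra.algebraMap_mem _ _
        · exact Algebra.subset_adjoin ⟨i, hip, by omega, rfl⟩
  refine ⟨fun n => hodd n, heven, ?_, hmem4⟩
  have h0 := hodd 0
  norm_num [Ssum, acoef, d.om_one] at h0
  simpa using h0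
end
end

section
/- Let F be an algebraically closed field of characteristic different from 2, let M be a finite dimensional simple B̃C_{r,t}-module over F, and let f(x) = x^k ∏_{i=1}^{n} (x − u_i), with all u_i nonzero in F, be the minimal polynomial of the action of x_1 on M. Then there exists ε ∈ {−1, 1} such that c_1 f(x_1) = ε f(x_1) c_1 in B̃C_{r,t}; equivalently, f(−x) = ± f(x), so the nonzero roots of f occur in pairs ±u. -/
open Polynomial

noncomputable section

/-- Conjugation of a polynomial in `x` by an element `c` anticommuting with `x`. -/
lemma conj_aeval_neg {R B : Type} [CommRing R] [Ring B] [Algebra R B]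
    (c x : B) (h : c * x = -(x * c)) (p : Polynomial R) :
    c * Polynomial.aeval x p = Polynomial.aeval (-x) p * c := by
  have hx : ∀ m : ℕ, c * x ^ m = (-x) ^ m * c := by
    intro m
    induction m with
    | zero => simp
    | succ m ih =>
        rw [pow_succ, ← mul_assoc, ih, mul_assoc, pow_succ, mul_assoc]
        congr 1
        rw [h, neg_mul]
  rw [Polynomial.aeval_eq_sum_range (x := x), Polynomial.aeval_eq_sum_range (x := -x),
    Finset.mul_sum, Finset.sum_mul]
  refine Finset.sum_congr rfl fun i _ => ?_
  rw [mul_smul_comm, smul_mul_assoc, hx i]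

/-- Lemma 6.1: if `M` is a finite dimensional simple `B̃C_{r,t}`-module over an
algebraically closed field `F` of characteristic `≠ 2` and `f(x) = x^k ∏ (x - u_i)` (all
`u_i ≠ 0`) is the minimal polynomial of the action of `x_1` on `M`, then
`c_1 f(x_1) = ε f(x_1) c_1` for some `ε ∈ {-1,1}`; equivalently `f(-x) = ± f(x)`. -/
theorem statement17 (F A : Type) [Field F] [IsAlgClosed F] [Ring A] [Algebra F A]
    (hchar : (2 : F) ≠ 0) (r t : ℕ) (hr : 1 ≤ r) (ht : 1 ≤ t)
    (ω : ℕ → F) (hωe : ∀ n, ω (2 * n) = 0)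
    (d : AWBC F A r t (ω 1)) (hu : d.IsSpecUniversal ω)
    (M : Type) [AddCommGroup M] [Module F M] [Module A M] [IsScalarTower F A M]
    [FiniteDimensional F M] (hsimple : IsSimpleModule A M)
    (T : Module.End F M) (hT : ∀ v : M, T v = d.x1 • v)
    (k n : ℕ) (u : Fin n → F) (hu0 : ∀ i, u i ≠ 0)
    (f : Polynomial F)
    (hf : f = Polynomial.X ^ k * ∏ i, (Polynomial.X - Polynomial.C (u i)))
    (hmin : minpoly F T = f) :
    ∃ ε : F, (ε = 1 ∨ ε = -1) ∧
      d.toWBC.cn 1 * Polynomial.aeval d.x1 f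
        = ε • (Polynomial.aeval d.x1 f * d.toWBC.cn 1) ∧
      (f.comp (-Polynomial.X) = f ∨ f.comp (-Polynomial.X) = -f) := by
  have h0r : 0 < r := hr
  set c0 : A := d.toWBC.c ⟨0, h0r⟩ with hc0
  -- `cn 1 = c0`
  have hcn : d.toWBC.cn 1 = c0 := by
    simp [WBC.cn, h0r, hc0]
  -- anticommutation in `A`
  have hac : c0 * d.x1 = -(d.x1 * c0) := by
    rw [d.x1_c1 h0r, neg_neg]
  -- f is monic, hence nonzero
  have fmonic : f.Monic := by
    rw [hf]
    exact (Polynomial.monic_X_pow k).mul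
      (Polynomial.monic_prod_of_monic _ _ fun i _ => Polynomial.monic_X_sub_C (u i))
  have fne : f ≠ 0 := fmonic.ne_zero
  -- the operator `C : v ↦ c0 • v`
  have hsm : ∀ (a : F) (v : M), c0 • a • v = a • c0 • v := by
    intro a v
    rw [← algebraMap_smul A a v, ← algebraMap_smul A a (c0 • v), smul_smul, smul_smul,
      Algebra.commutes]
  set Cm : Module.End F M :=
    { toFun := fun v => c0 • v
      map_add' := fun v w => smul_add c0 v w
      map_smul' := fun a v => hsm a v } with hCm
  have hCT : Cm * T = -(T * Cm) := by
    ext v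
    simp only [Module.End.mul_apply, LinearMap.neg_apply, hCm, LinearMap.coe_mk,
      AddHom.coe_mk, hT]
    rw [smul_smul, smul_smul, hac, neg_smul]
  have hCC : Cm * Cm = -1 := by
    ext v
    simp only [Module.End.mul_apply, LinearMap.neg_apply, Module.End.one_apply, hCm,
      LinearMap.coe_mk, AddHom.coe_mk]
    rw [smul_smul, d.toWBC.c_sq, neg_one_smul]
  -- `f(T) = 0` hence `f(-T) = 0`
  have hfT : Polynomial.aeval T f = 0 := by
    rw [← hmin]; exact minpoly.aeval F T
  have hnegT : Polynomial.aeval (-T) f = 0 := by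
    have h1 := conj_aeval_neg Cm T hCT f
    rw [hfT, mul_zero] at h1
    have h2 : Polynomial.aeval (-T) f * (Cm * Cm) = 0 := by
      rw [← mul_assoc, ← h1, zero_mul]
    rw [hCC, mul_neg_one, neg_eq_zero] at h2
    exact h2
  -- hence `f ∣ f.comp (-X)`
  have hcompT : Polynomial.aeval T (f.comp (-Polynomial.X)) = 0 := by
    rw [Polynomial.aeval_comp]
    simpa using hnegT
  have hdvd : f ∣ f.comp (-Polynomial.X) := by
    have h := minpoly.dvd F T hcompT
    rwa [hmin] at h
  obtain ⟨q, hq⟩ := hdvd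
  -- `f.comp (-X) ≠ 0`
  have hcc : (f.comp (-Polynomial.X)).comp (-Polynomial.X) = f := by
    rw [Polynomial.comp_assoc]
    simp
  have hcompne : f.comp (-Polynomial.X) ≠ 0 := by
    intro h
    rw [h, Polynomial.zero_comp] at hcc
    exact fne hcc.symm
  have hqne : q ≠ 0 := by
    intro h; rw [h, mul_zero] at hq; exact hcompne hq
  -- `q` is a constant
  have hdeg : q.natDegree = 0 := by
    have h1 : (f.comp (-Polynomial.X)).natDegree = f.natDegree := by
      rw [Polynomial.natDegree_comp]
      simp
    have h2 := Polynomial.natDegree_mul fne hqne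
    rw [← hq, h1] at h2
    omega
  obtain ⟨a, ha⟩ := Polynomial.natDegree_eq_zero.mp hdeg
  -- `a * a = 1`
  have hkey : f = f * Polynomial.C (a * a) := by
    conv_lhs => rw [← hcc, hq, ← ha]
    rw [Polynomial.mul_comp, Polynomial.C_comp, hq, ← ha, map_mul, mul_assoc]
  have haa : a * a = 1 := by
    have := mul_left_cancel₀ fne (by rw [← hkey, mul_one] : f * Polynomial.C (a * a) = f * 1)
    exact_mod_cast Polynomial.C_injective (by simpa using this)
  have hpm : a = 1 ∨ a = -1 := mul_self_eq_one_iff.mp haa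
  refine ⟨a, hpm, ?_, ?_⟩
  · -- `c1 f(x1) = a • f(x1) c1`
    rw [hcn, conj_aeval_neg c0 d.x1 hac f]
    have : Polynomial.aeval (-d.x1) f = Polynomial.aeval d.x1 (f.comp (-Polynomial.X)) := by
      rw [Polynomial.aeval_comp]; simp
    rw [this, hq, ← ha, map_mul, Polynomial.aeval_C, mul_assoc, ← Algebra.smul_def,
      mul_smul_comm]
  · rcases hpm with h | h
    · left; rw [hq, ← ha, h, map_one, mul_one]
    · right; rw [hq, ← ha, h, map_neg, map_one, mul_neg_one]
end
end
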